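/- arXiv:2503.05062 — 10 statements merged into one kernel-verified Lean document; each statement's English description precedes it below -/
import Mathlib

section
/- Let F_q be a finite field, let L ∈ F_q[X] be monic of degree m ≥ 1, and let b_1,…,b_{n_s} ∈ F_q be pairwise distinct such that each fiber P[j] = {a ∈ F_q : L(a) = b_j} has exactly m elements. Set n = m·n_s and enumerate the evaluation points a_1,…,a_n fiber by fiber, i.e. {a_{(j−1)m+1},…,a_{jm}} = P[j] for each j. Let 1 ≤ k ≤ n and let RS[n,k] = {(f(a_1),…,f(a_n)) : f ∈ F_q[X], deg f < k}. Then for every r ∈ F_q^n and every integer ℓ with 0 ≤ ℓ ≤ n − k − 2m, the number of codewords c ∈ RS[n,k] such that r − c is an ℓ-burst is at most ⌊(k−1)/m⌋ + 2. (In particular, choosing n_s = ⌈2/ε⌉ this says RS[n,k] is (1 − k/n − ε, O(1/ε))-burst list-decodable, which is the combinatorial content of the paper's Main Theorem 1 / Theorem 4.2.) -/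
open Polynomial

open Classical in
/-- The index of the first "fiber" (block of `m` consecutive coordinates) on which
`e` is nonzero, or `ns` if `e = 0`. -/
noncomputable def uStart {F : Type*} [Zero F] (m ns n : ℕ) (e : Fin n → F) : ℕ :=
  if ∀ q, e q = 0 then ns else sInf {t | ∃ q : Fin n, e q ≠ 0 ∧ (q : ℕ) / m = t}

theorem uStart_le {F : Type*} [Zero F] {m ns n : ℕ} {e : Fin n → F} {q : Fin n}
    (hq : e q ≠ 0) : uStart m ns n e ≤ (q : ℕ) / m := by
  rw [uStart, if_neg (by push_neg; exact ⟨q, hq⟩)]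
  exact Nat.sInf_le ⟨q, hq, rfl⟩

theorem uStart_witness {F : Type*} [Zero F] {m ns n : ℕ} {e : Fin n → F} {q : Fin n}
    (hq : e q ≠ 0) : ∃ q0 : Fin n, e q0 ≠ 0 ∧ (q0 : ℕ) / m = uStart m ns n e := by
  rw [uStart, if_neg (by push_neg; exact ⟨q, hq⟩)]
  exact Nat.sInf_mem (s := {t | ∃ q : Fin n, e q ≠ 0 ∧ (q : ℕ) / m = t}) ⟨(q : ℕ) / m, q, hq, rfl⟩

theorem uStart_le_ns {F : Type*} [Zero F] {m ns n : ℕ} (hm : 0 < m) (hn : n = m * ns)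
    (e : Fin n → F) : uStart m ns n e ≤ ns := by
  by_cases h : ∀ q, e q = 0
  · rw [uStart, if_pos h]
  · push_neg at h
    obtain ⟨q, hq⟩ := h
    refine (uStart_le hq).trans (le_of_lt ?_)
    rw [Nat.div_lt_iff_lt_mul hm, mul_comm]
    exact hn ▸ q.isLt

theorem card_filter_val_lt {n B : ℕ} (hB : B ≤ n) :
    (Finset.univ.filter fun q : Fin n => (q : ℕ) < B).card = B := by
  classical
  rw [← Finset.card_range B]
  apply Finset.card_bij (fun (q : Fin n) _ => (q : ℕ))
  · intro q hq
    simp only [Finset.mem_filter] at hq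
    simpa using hq.2
  · intro q1 h1 q2 h2 h
    exact Fin.ext h
  · intro x hx
    simp only [Finset.mem_range] at hx
    exact ⟨⟨x, lt_of_lt_of_le hx hB⟩, by simp [hx], rfl⟩

theorem card_le_of_val_mem_Ico {n : ℕ} (s : Finset (Fin n)) (A B : ℕ)
    (h : ∀ q ∈ s, A ≤ (q : ℕ) ∧ (q : ℕ) < B) : s.card ≤ B - A := by
  classical
  have h1 : s.image Fin.val ⊆ Finset.Ico A B := by
    intro x hx
    simp only [Finset.mem_image] at hx
    obtain ⟨q, hq, rfl⟩ := hx
    simpa [Finset.mem_Ico] using h q hq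
  have h2 := Finset.card_le_card h1
  rwa [Finset.card_image_of_injective _ Fin.val_injective, Nat.card_Ico] at h2

theorem card_roots_aux {F : Type*} [Field F] {p : Polynomial F}
    (hp : p ≠ 0) (s : Finset F) (h : ∀ x ∈ s, p.eval x = 0) : s.card ≤ p.natDegree :=
  Polynomial.card_le_degree_of_subset_roots
    (fun x hx => (Polynomial.mem_roots hp).2 (h x hx))

theorem eq_of_eval_eq {F : Type*} [Field F] {n k : ℕ}
    (a : Fin n → F) (ha : Function.Injective a) {f g : Polynomial F}
    (hf : f.degree < (k : WithBot ℕ)) (hg : g.degree < (k : WithBot ℕ))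
    (Q : Finset (Fin n)) (hQ : k ≤ Q.card)
    (h : ∀ q ∈ Q, f.eval (a q) = g.eval (a q)) : f = g := by
  classical
  by_contra hne
  have hp : f - g ≠ 0 := sub_ne_zero.2 hne
  have hd : (f - g).natDegree < k :=
    (Polynomial.natDegree_lt_iff_degree_lt hp).2
      (lt_of_le_of_lt (Polynomial.degree_sub_le f g) (max_lt hf hg))
  have hcard := card_roots_aux hp (Q.image a) (by
    intro x hx
    simp only [Finset.mem_image] at hx
    obtain ⟨q, hq, rfl⟩ := hx
    simp [h q hq])
  rw [Finset.card_image_of_injective _ ha] at hcard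
  omega

/-- Burst list-decodability of Reed–Solomon codes with a
fiber-structured evaluation set: for every received word `r` and every burst
length `ℓ ≤ n - k - 2m`, the number of codewords `c` of `RS[n,k]` such that
`r - c` is an `ℓ`-burst is at most `⌊(k-1)/m⌋ + 2`. -/
theorem rs_burst_list_decodable
    (F : Type*) [Field F] [Fintype F] [DecidableEq F]
    (m ns n k : ℕ) (hm : 1 ≤ m) (hn : n = m * ns)
    (L : Polynomial F) (hLmonic : L.Monic) (hLdeg : L.natDegree = m)
    (b : Fin ns → F) (hb : Function.Injective b)
    (hfiber : ∀ j : Fin ns,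
      (Finset.univ.filter (fun x : F => L.eval x = b j)).card = m)
    (a : Fin n → F) (ha : Function.Injective a)
    (idx : Fin m → Fin ns → Fin n)
    (hidx : ∀ i j, (idx i j : ℕ) = (j : ℕ) * m + (i : ℕ))
    (hblock : ∀ i j, L.eval (a (idx i j)) = b j)
    (hk : 1 ≤ k) (hkn : k ≤ n)
    (r : Fin n → F) (ℓ : ℕ) (hℓ : ℓ + k + 2 * m ≤ n) :
    Set.ncard {c : Fin n → F |
        (∃ f : Polynomial F, f.degree < k ∧ ∀ q, c q = f.eval (a q)) ∧
        (∀ i j : Fin n, (r - c) i ≠ 0 → (r - c) j ≠ 0 → (j : ℕ) - (i : ℕ) < ℓ)} ≤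
      (k - 1) / m + 2 := by
  classical
  have hm0 : 0 < m := hm
  set S : Set (Fin n → F) := {c : Fin n → F |
        (∃ f : Polynomial F, f.degree < k ∧ ∀ q, c q = f.eval (a q)) ∧
        (∀ i j : Fin n, (r - c) i ≠ 0 → (r - c) j ≠ 0 → (j : ℕ) - (i : ℕ) < ℓ)} with hS
  set D : ℕ := (ℓ - 1) / m + 1 with hD
  set K : ℕ := (k - 1) / m with hK
  -- arithmetic: the window of `D+1` fibers is small
  have hDn : m * (D + 1) + k ≤ n := by
    have h1 : (ℓ - 1) / m * m ≤ ℓ - 1 := Nat.div_mul_le_self _ _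
    have h2 : m * (D + 1) = (ℓ - 1) / m * m + 2 * m := by rw [hD]; ring
    have h3 : ℓ - 1 ≤ ℓ := Nat.sub_le _ _
    linarith
  -- outside the window of fibers, a list codeword agrees with r
  have hout : ∀ c ∈ S, ∀ q : Fin n,
      ((q : ℕ) / m < uStart m ns n (r - c) ∨ uStart m ns n (r - c) + D < (q : ℕ) / m) →
      c q = r q := by
    intro c hc q hq
    by_contra hne
    have he : (r - c) q ≠ 0 := by
      simp only [Pi.sub_apply, sub_ne_zero]
      exact fun h => hne h.symm
    rcases hq with h | h
    · have h2 := uStart_le (m := m) (ns := ns) he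
      omega
    · obtain ⟨q0, hq0, hq0m⟩ := uStart_witness he
      have hburst := hc.2 q0 q hq0 he
      have hl : 0 < ℓ := by
        have := hc.2 q q he he
        omega
      have hle : (q : ℕ) ≤ (q0 : ℕ) + (ℓ - 1) := by omega
      have hmono : (q : ℕ) / m ≤ ((q0 : ℕ) + (ℓ - 1)) / m := Nat.div_le_div_right hle
      have hadd : ((q0 : ℕ) + (ℓ - 1)) / m ≤ (q0 : ℕ) / m + (ℓ - 1) / m + 1 := by
        rw [Nat.add_div hm0]
        split_ifs <;> simp
      have h3 : (q : ℕ) / m ≤ uStart m ns n (r - c) + D := by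
        rw [hD, ← hq0m]
        linarith
      exact absurd h h3.not_gt
  -- distinct codewords in the list have distinct starting fibers
  have hinj : ∀ c1 ∈ S, ∀ c2 ∈ S,
      uStart m ns n (r - c1) = uStart m ns n (r - c2) → c1 = c2 := by
    intro c1 hc1 c2 hc2 huv
    obtain ⟨⟨f1, hf1d, hf1⟩, hb1⟩ := hc1
    obtain ⟨⟨f2, hf2d, hf2⟩, hb2⟩ := hc2
    have hc1' : c1 ∈ S := ⟨⟨f1, hf1d, hf1⟩, hb1⟩
    have hc2' : c2 ∈ S := ⟨⟨f2, hf2d, hf2⟩, hb2⟩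
    set t := uStart m ns n (r - c1) with ht
    set Q : Finset (Fin n) :=
      Finset.univ.filter (fun q : Fin n => (q : ℕ) / m < t ∨ t + D < (q : ℕ) / m) with hQ
    have hQc : (Finset.univ.filter
        (fun q : Fin n => ¬ ((q : ℕ) / m < t ∨ t + D < (q : ℕ) / m))).card ≤ m * (D + 1) := by
      have := card_le_of_val_mem_Ico
        (Finset.univ.filter
          (fun q : Fin n => ¬ ((q : ℕ) / m < t ∨ t + D < (q : ℕ) / m)))
        (m * t) (m * (t + D + 1)) ?_
      · have hB : m * (t + D + 1) = m * t + m * (D + 1) := by ring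
        rwa [hB, Nat.add_sub_cancel_left] at this
      · intro q hq
        simp only [Finset.mem_filter, not_or, not_lt] at hq
        obtain ⟨-, h1, h2⟩ := hq
        constructor
        · calc m * t = t * m := mul_comm _ _
            _ ≤ q := (Nat.le_div_iff_mul_le hm0).1 h1
        · have : (q : ℕ) / m < t + D + 1 := by omega
          calc (q : ℕ) < (t + D + 1) * m := (Nat.div_lt_iff_lt_mul hm0).1 this
            _ = m * (t + D + 1) := mul_comm _ _
    have hQcard : k ≤ Q.card := by
      have hsplit := Finset.card_filter_add_card_filter_not
        (s := (Finset.univ : Finset (Fin n)))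
        (p := fun q : Fin n => (q : ℕ) / m < t ∨ t + D < (q : ℕ) / m)
      rw [Finset.card_univ, Fintype.card_fin] at hsplit
      rw [hQ]
      linarith
    have hfeq : f1 = f2 := by
      refine eq_of_eval_eq a ha hf1d hf2d Q hQcard ?_
      intro q hq
      rw [← hf1, ← hf2]
      simp only [hQ, Finset.mem_filter] at hq
      have e1 : c1 q = r q := hout c1 hc1' q (by rw [← ht]; exact hq.2)
      have e2 : c2 q = r q := hout c2 hc2' q (by rw [← huv]; exact hq.2)
      rw [e1, e2]
    funext q
    rw [hf1, hf2, hfeq]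
  -- for two distinct codewords, the smaller starting fiber is at most K
  have hmin : ∀ c1 ∈ S, ∀ c2 ∈ S, c1 ≠ c2 →
      min (uStart m ns n (r - c1)) (uStart m ns n (r - c2)) ≤ K := by
    intro c1 hc1 c2 hc2 hne
    obtain ⟨⟨f1, hf1d, hf1⟩, hb1⟩ := hc1
    obtain ⟨⟨f2, hf2d, hf2⟩, hb2⟩ := hc2
    have hc1' : c1 ∈ S := ⟨⟨f1, hf1d, hf1⟩, hb1⟩
    have hc2' : c2 ∈ S := ⟨⟨f2, hf2d, hf2⟩, hb2⟩
    set t := min (uStart m ns n (r - c1)) (uStart m ns n (r - c2)) with ht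
    have hfne : f1 ≠ f2 := by
      intro h
      apply hne
      funext q
      rw [hf1, hf2, h]
    have hp : f1 - f2 ≠ 0 := sub_ne_zero.2 hfne
    have hd : (f1 - f2).natDegree < k :=
      (Polynomial.natDegree_lt_iff_degree_lt hp).2
        (lt_of_le_of_lt (Polynomial.degree_sub_le f1 f2) (max_lt hf1d hf2d))
    set Q : Finset (Fin n) := Finset.univ.filter (fun q : Fin n => (q : ℕ) < m * t) with hQ
    have htns : t ≤ ns := le_trans (min_le_left _ _) (uStart_le_ns hm0 hn _)
    have hmtn : m * t ≤ n := by
      rw [hn]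
      exact Nat.mul_le_mul_left m htns
    have hQcard : Q.card = m * t := card_filter_val_lt hmtn
    have hzero : ∀ q ∈ Q, (f1 - f2).eval (a q) = 0 := by
      intro q hq
      simp only [hQ, Finset.mem_filter] at hq
      have hqt : (q : ℕ) / m < t := by
        rw [Nat.div_lt_iff_lt_mul hm0, mul_comm]
        exact hq.2
      have e1 : c1 q = r q := hout c1 hc1' q (Or.inl (lt_of_lt_of_le hqt (min_le_left _ _)))
      have e2 : c2 q = r q := hout c2 hc2' q (Or.inl (lt_of_lt_of_le hqt (min_le_right _ _)))
      have : f1.eval (a q) = f2.eval (a q) := by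
        rw [← hf1, ← hf2, e1, e2]
      simp [this]
    have hcard := card_roots_aux hp (Q.image a) (by
      intro x hx
      simp only [Finset.mem_image] at hx
      obtain ⟨q, hq, rfl⟩ := hx
      exact hzero q hq)
    rw [Finset.card_image_of_injective _ ha, hQcard] at hcard
    have htm : t * m ≤ k - 1 := by
      have : m * t = t * m := mul_comm _ _
      omega
    rw [hK]
    exact (Nat.le_div_iff_mul_le hm0).2 htm
  -- counting
  have hfin : S.Finite := Set.toFinite _
  rw [Set.ncard_eq_toFinset_card' S]
  set Fs := S.toFinset with hFs
  have hmem : ∀ c, c ∈ Fs ↔ c ∈ S := fun c => Set.mem_toFinset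
  set T := Fs.image (fun c => uStart m ns n (r - c)) with hT
  have hcard1 : Fs.card = T.card := by
    rw [hT]
    exact (Finset.card_image_of_injOn (fun c1 h1 c2 h2 h =>
      hinj c1 ((hmem c1).1 h1) c2 ((hmem c2).1 h2) h)).symm
  have hone : (T.filter (fun x => K < x)).card ≤ 1 := by
    rw [Finset.card_le_one]
    intro x hx y hy
    by_contra hxy
    simp only [Finset.mem_filter, hT, Finset.mem_image] at hx hy
    obtain ⟨⟨c1, hc1, hx1⟩, hxK⟩ := hx
    obtain ⟨⟨c2, hc2, hy1⟩, hyK⟩ := hy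
    have hne : c1 ≠ c2 := by
      intro h
      apply hxy
      rw [← hx1, ← hy1, h]
    have := hmin c1 ((hmem c1).1 hc1) c2 ((hmem c2).1 hc2) hne
    rw [hx1, hy1] at this
    omega
  have htwo : (T.filter (fun x => ¬ K < x)).card ≤ K + 1 := by
    have hsub : T.filter (fun x => ¬ K < x) ⊆ Finset.range (K + 1) := by
      intro x hx
      simp only [Finset.mem_filter, not_lt] at hx
      simp only [Finset.mem_range]
      omega
    calc (T.filter (fun x => ¬ K < x)).card ≤ (Finset.range (K + 1)).card :=
          Finset.card_le_card hsub
      _ = K + 1 := Finset.card_range _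
  have hsplit := Finset.card_filter_add_card_filter_not
    (s := T) (p := fun x => K < x)
  omega
end

section
/- Let F_q be a finite field, let L ∈ F_q[X] be monic of degree m ≥ 1, and let b_1,…,b_{n_s} ∈ F_q be pairwise distinct such that each fiber P[j] = {a ∈ F_q : L(a) = b_j} has exactly m elements. Set n = m·n_s, enumerate the evaluation points a_1,…,a_n fiber by fiber, and let 1 ≤ k ≤ n. Write each f ∈ F_q[X] with deg f < k uniquely as f = Σ_{u=0}^{m−1} f_u(L(X))·X^u. Then the map τ sending the codeword (f(a_1),…,f(a_n)) ∈ RS[n,k] to the m×n_s matrix whose (u+1, j) entry is f_u(b_j) is a bijection from RS[n,k] onto the heterogeneous interleaved Reed–Solomon code IRS_m(n_s; k_0,…,k_{m−1}) = {M ∈ F_q^{m×n_s} : for each u, row u+1 of M equals (g_u(b_1),…,g_u(b_{n_s})) for some g_u ∈ F_q[X] with deg g_u < k_u}, where k_u = ⌊(k−1−u)/m⌋ + 1 (so g_u = 0 whenever k_u ≤ 0). -/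
open Polynomial


namespace RsIrsAux
variable {F : Type*} [Field F]

noncomputable def dq (L f : Polynomial F) : ℕ → Polynomial F
  | 0 => f
  | (i+1) => dq L f i /ₘ L

noncomputable def dg (L f : Polynomial F) (i : ℕ) : Polynomial F := dq L f i %ₘ L

noncomputable def fold (L f : Polynomial F) (u : ℕ) : Polynomial F :=
  ∑ i ∈ Finset.range (f.natDegree + 1), C ((dg L f i).coeff u) * X ^ i

variable {L : Polynomial F} (hL : L.Monic) (hm1 : 1 ≤ L.natDegree)

include hL hm1 in
lemma dq_deg (f : Polynomial F) (i : ℕ) (h : dq L f i ≠ 0) :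
    i * L.natDegree + (dq L f i).natDegree ≤ f.natDegree := by
  induction i with
  | zero => simp [dq]
  | succ i ih =>
    have hne : dq L f i ≠ 0 := by
      intro h0
      apply h
      show dq L f i /ₘ L = 0
      rw [h0]; simp
    have hdm : ¬ (dq L f i).degree < L.degree := by
      intro hlt
      exact h ((divByMonic_eq_zero_iff hL).2 hlt)
    have hdm' : L.natDegree ≤ (dq L f i).natDegree := by
      have := le_of_not_gt hdm
      exact natDegree_le_natDegree this
    have hnd : (dq L f (i+1)).natDegree = (dq L f i).natDegree - L.natDegree := by
      show ((dq L f i) /ₘ L).natDegree = _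
      exact natDegree_divByMonic _ hL
    have := ih hne
    have hmul : (i+1) * L.natDegree = i * L.natDegree + L.natDegree := by ring
    omega

include hL hm1 in
lemma dq_top (f : Polynomial F) : dq L f (f.natDegree + 1) = 0 := by
  by_contra h
  have := dq_deg hL hm1 f (f.natDegree + 1) h
  nlinarith [Nat.one_le_iff_ne_zero.1 hm1]

include hL in
lemma sum_dg_aux (f : Polynomial F) (N : ℕ) :
    f = (∑ i ∈ Finset.range N, dg L f i * L ^ i) + dq L f N * L ^ N := by
  induction N with
  | zero => simp [dq]
  | succ N ih =>
    rw [Finset.sum_range_succ]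
    have hstep : dq L f N = dg L f N + L * (dq L f N /ₘ L) :=
      (modByMonic_add_div (dq L f N) L).symm
    calc f = (∑ i ∈ Finset.range N, dg L f i * L ^ i) + dq L f N * L ^ N := ih
    _ = ((∑ i ∈ Finset.range N, dg L f i * L ^ i) + dg L f N * L ^ N)
        + dq L f (N+1) * L ^ (N+1) := by
        rw [hstep]; show _ = _ + (dq L f N /ₘ L) * L ^ (N+1); ring

include hL hm1 in
lemma sum_dg (f : Polynomial F) :
    f = ∑ i ∈ Finset.range (f.natDegree + 1), dg L f i * L ^ i := by
  have := sum_dg_aux hL f (f.natDegree + 1)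
  rw [dq_top hL hm1] at this
  simpa using this

include hL in
lemma dg_deg_lt (f : Polynomial F) (i : ℕ) : (dg L f i).natDegree < L.natDegree ∨ dg L f i = 0 := by
  rcases eq_or_ne (dg L f i) 0 with h | h
  · exact Or.inr h
  · left
    have := degree_modByMonic_lt (dq L f i) hL
    have hLne : L ≠ 0 := hL.ne_zero
    exact natDegree_lt_natDegree h this

include hL in
lemma dg_deg_le (f : Polynomial F) (i : ℕ) : (dg L f i).natDegree ≤ (dq L f i).natDegree := by
  by_cases hlt : (dq L f i).degree < L.degree
  · rw [show dg L f i = dq L f i from (modByMonic_eq_self_iff hL).2 hlt]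
  · rcases dg_deg_lt hL f i with h | h
    · have : L.natDegree ≤ (dq L f i).natDegree := natDegree_le_natDegree (le_of_not_gt hlt)
      omega
    · simp [h]

lemma fold_coeff (f : Polynomial F) (u j : ℕ) :
    (fold L f u).coeff j = if j < f.natDegree + 1 then (dg L f j).coeff u else 0 := by
  unfold fold
  rw [finset_sum_coeff]
  simp only [coeff_C_mul, coeff_X_pow, mul_ite, mul_one, mul_zero]
  rw [Finset.sum_ite_eq (Finset.range (f.natDegree+1)) j (fun i => (dg L f i).coeff u)]
  simp [Finset.mem_range]

include hL hm1 in
lemma fold_deg (f : Polynomial F) (u : ℕ) (h : fold L f u ≠ 0) :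
    L.natDegree * (fold L f u).natDegree + u ≤ f.natDegree := by
  set nd := (fold L f u).natDegree with hnd
  have hc : (fold L f u).coeff nd ≠ 0 := by
    rw [hnd]; exact leadingCoeff_ne_zero.2 h
  rw [fold_coeff] at hc
  by_cases hlt : nd < f.natDegree + 1
  · rw [if_pos hlt] at hc
    have hdgne : dg L f nd ≠ 0 := fun h0 => hc (by simp [h0])
    have hu : u ≤ (dg L f nd).natDegree := le_natDegree_of_ne_zero hc
    have h1 : (dg L f nd).natDegree ≤ (dq L f nd).natDegree := dg_deg_le hL f nd
    have hqne : dq L f nd ≠ 0 := by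
      intro h0
      apply hdgne
      show dq L f nd %ₘ L = 0
      rw [h0]; simp
    have := dq_deg hL hm1 f nd hqne
    nlinarith
  · rw [if_neg hlt] at hc
    exact absurd rfl hc

include hL hm1 in
lemma fold_spec (f : Polynomial F) :
    ∑ u ∈ Finset.range L.natDegree, (fold L f u).comp L * X ^ u = f := by
  set N := f.natDegree + 1
  have h1 : ∀ u, (fold L f u).comp L = ∑ i ∈ Finset.range N, C ((dg L f i).coeff u) * L ^ i := by
    intro u
    unfold fold
    rw [sum_comp]
    congr 1; funext i
    simp [mul_comp, C_comp, X_pow_comp]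
  calc ∑ u ∈ Finset.range L.natDegree, (fold L f u).comp L * X ^ u
      = ∑ u ∈ Finset.range L.natDegree, ∑ i ∈ Finset.range N,
          (C ((dg L f i).coeff u) * X ^ u) * L ^ i := by
        refine Finset.sum_congr rfl fun u _ => ?_
        rw [h1, Finset.sum_mul]
        refine Finset.sum_congr rfl fun i _ => ?_
        ring
    _ = ∑ i ∈ Finset.range N, (∑ u ∈ Finset.range L.natDegree,
          C ((dg L f i).coeff u) * X ^ u) * L ^ i := by
        rw [Finset.sum_comm]
        refine Finset.sum_congr rfl fun i _ => ?_
        rw [Finset.sum_mul]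
    _ = ∑ i ∈ Finset.range N, dg L f i * L ^ i := by
        refine Finset.sum_congr rfl fun i _ => ?_
        congr 1
        have hdlt : (dg L f i).natDegree < L.natDegree := by
          rcases dg_deg_lt hL f i with h | h
          · exact h
          · rw [h, natDegree_zero]; omega
        conv_rhs => rw [(dg L f i).as_sum_range' L.natDegree hdlt]
        refine Finset.sum_congr rfl fun u _ => ?_
        rw [C_mul_X_pow_eq_monomial]
    _ = f := (sum_dg hL hm1 f).symm

include hm1 in
lemma comp_ne {p : Polynomial F} (hp : p ≠ 0) : p.comp L ≠ 0 := by
  intro h0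
  rcases comp_eq_zero_iff.1 h0 with h | ⟨_, hC⟩
  · exact hp h
  · have : L.natDegree = 0 := by rw [hC, natDegree_C]
    omega

include hL hm1 in
lemma unique_zero {m : ℕ} (hmL : L.natDegree = m) (g : Fin m → Polynomial F)
    (hsum : ∑ u : Fin m, (g u).comp L * X ^ (u : ℕ) = 0) : ∀ u, g u = 0 := by
  classical
  by_contra hc
  push_neg at hc
  obtain ⟨u1, hu1⟩ := hc
  set T : Finset (Fin m) := Finset.univ.filter (fun u => g u ≠ 0) with hT
  have hTne : T.Nonempty := ⟨u1, by simp [hT, hu1]⟩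
  obtain ⟨u0, hu0T, hu0max⟩ := Finset.exists_max_image T
    (fun u => L.natDegree * (g u).natDegree + (u : ℕ)) hTne
  have hg0 : g u0 ≠ 0 := (Finset.mem_filter.1 hu0T).2
  set d0 := L.natDegree * (g u0).natDegree + (u0 : ℕ) with hd0
  have hterm : ∀ u : Fin m, g u ≠ 0 →
      ((g u).comp L * X ^ (u : ℕ)).natDegree = L.natDegree * (g u).natDegree + (u : ℕ) := by
    intro u hu
    rw [natDegree_mul (comp_ne hm1 hu) (pow_ne_zero _ X_ne_zero),
      natDegree_comp, natDegree_X_pow, mul_comm]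
  have htne : (g u0).comp L * X ^ (u0 : ℕ) ≠ 0 :=
    mul_ne_zero (comp_ne hm1 hg0) (pow_ne_zero _ X_ne_zero)
  have hcoeff : (∑ u : Fin m, (g u).comp L * X ^ (u : ℕ)).coeff d0 ≠ 0 := by
    rw [finset_sum_coeff]
    have hsplit : ∀ u : Fin m, u ≠ u0 → ((g u).comp L * X ^ (u : ℕ)).coeff d0 = 0 := by
      intro u hu
      rcases eq_or_ne (g u) 0 with h | h
      · simp [h]
      · refine coeff_eq_zero_of_natDegree_lt ?_
        rw [hterm u h]
        have hle : L.natDegree * (g u).natDegree + (u : ℕ) ≤ d0 :=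
          hu0max u (by simp [hT, h])
        rcases lt_or_eq_of_le hle with hlt | heq
        · exact hlt
        · exfalso
          apply hu
          have hum : (u : ℕ) < L.natDegree := by rw [hmL]; exact u.2
          have hu0m : (u0 : ℕ) < L.natDegree := by rw [hmL]; exact u0.2
          have h2 := congrArg (· % L.natDegree) heq
          simp only [hd0] at h2
          rw [Nat.mul_add_mod, Nat.mul_add_mod, Nat.mod_eq_of_lt hum,
            Nat.mod_eq_of_lt hu0m] at h2
          exact Fin.ext h2
    rw [Finset.sum_eq_single u0]
    · rw [hd0, ← hterm u0 hg0]
      exact leadingCoeff_ne_zero.2 htne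
    · exact fun u _ hu => hsplit u hu
    · intro h; exact absurd (Finset.mem_univ u0) h
  rw [hsum] at hcoeff
  simp at hcoeff

include hL hm1 in
lemma decomp_unique {m : ℕ} (hmL : L.natDegree = m) (g h : Fin m → Polynomial F)
    (heq : ∑ u : Fin m, (g u).comp L * X ^ (u : ℕ) = ∑ u : Fin m, (h u).comp L * X ^ (u : ℕ)) :
    g = h := by
  have h0 : ∑ u : Fin m, ((g u - h u).comp L) * X ^ (u : ℕ) = 0 := by
    simp only [sub_comp, sub_mul]
    rw [Finset.sum_sub_distrib, heq, sub_self]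
  funext u
  have := unique_zero hL hm1 hmL (fun u => g u - h u) h0 u
  exact sub_eq_zero.1 this

lemma dq_zero (L : Polynomial F) (i : ℕ) : dq L 0 i = 0 := by
  induction i with
  | zero => rfl
  | succ i ih => show dq L 0 i /ₘ L = 0; rw [ih]; simp

lemma fold_zero (L : Polynomial F) (u : ℕ) : fold L 0 u = 0 := by
  unfold fold
  refine Finset.sum_eq_zero fun i _ => ?_
  show C ((dq L 0 i %ₘ L).coeff u) * X ^ i = 0
  rw [dq_zero]
  simp

include hm1 in
lemma term_natDegree {p : Polynomial F} (hp : p ≠ 0) (u : ℕ) :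
    (p.comp L * X ^ u).natDegree = L.natDegree * p.natDegree + u := by
  rw [natDegree_mul (comp_ne hm1 hp) (pow_ne_zero _ X_ne_zero), natDegree_comp,
    natDegree_X_pow, mul_comm p.natDegree]

end RsIrsAux


/-- The fold-then-column-transform map `τ`, sending the
Reed–Solomon codeword `(f(a_1),…,f(a_n))` (with `f = Σ_u f_u(L(X))·X^u`,
`deg f < k`) to the `m × n_s` matrix with `(u,j)` entry `f_u(b_j)`, is a
bijection from `RS[n,k]` onto the heterogeneous interleaved Reed–Solomon code
`IRS_m(n_s; k_0,…,k_{m-1})` with `k_u = ⌊(k-1-u)/m⌋ + 1`. -/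
theorem rs_irs_bijection
    (F : Type*) [Field F] [Fintype F] [DecidableEq F]
    (m ns n k : ℕ) (hm : 1 ≤ m) (hn : n = m * ns)
    (L : Polynomial F) (hLmonic : L.Monic) (hLdeg : L.natDegree = m)
    (b : Fin ns → F) (hb : Function.Injective b)
    (hfiber : ∀ j : Fin ns,
      (Finset.univ.filter (fun x : F => L.eval x = b j)).card = m)
    (a : Fin n → F) (ha : Function.Injective a)
    (idx : Fin m → Fin ns → Fin n)
    (hidx : ∀ i j, (idx i j : ℕ) = (j : ℕ) * m + (i : ℕ))
    (hblock : ∀ i j, L.eval (a (idx i j)) = b j)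
    (hk : 1 ≤ k) (hkn : k ≤ n) :
    ∃ τ : (Fin n → F) → Matrix (Fin m) (Fin ns) F,
      Set.BijOn τ
        {c : Fin n → F | ∃ f : Polynomial F, f.degree < k ∧ ∀ q, c q = f.eval (a q)}
        {M : Matrix (Fin m) (Fin ns) F | ∀ u : Fin m, ∃ g : Polynomial F,
          (g = 0 ∨ (g.natDegree : ℤ) < ((k : ℤ) - 1 - (u : ℕ)).fdiv (m : ℤ) + 1) ∧
          ∀ j, M u j = g.eval (b j)} ∧
      ∀ f : Polynomial F, f.degree < k →
        ∀ fu : Fin m → Polynomial F,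
          f = ∑ u : Fin m, (fu u).comp L * X ^ (u : ℕ) →
          τ (fun q => f.eval (a q)) = Matrix.of fun u j => (fu u).eval (b j) := by
  classical
  have hm1 : 1 ≤ L.natDegree := by rw [hLdeg]; exact hm
  have hns1 : 1 ≤ ns := by
    rcases Nat.eq_zero_or_pos ns with h | h
    · subst h; simp at hn; omega
    · exact h
  have hcard : (Finset.univ : Finset (Fin n)).card = n := by simp
  have hcardb : (Finset.univ : Finset (Fin ns)).card = ns := by simp
  set interp : (Fin n → F) → Polynomial F :=
    fun c => Lagrange.interpolate Finset.univ a c with hinterp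
  have hrecov : ∀ f : Polynomial F, f.degree < (k : WithBot ℕ) →
      interp (fun q => f.eval (a q)) = f := by
    intro f hf
    refine (Lagrange.eq_interpolate ha.injOn ?_).symm
    rw [hcard]
    exact lt_of_lt_of_le hf (by exact_mod_cast hkn)
  have hdecomp : ∀ f : Polynomial F,
      ∑ u : Fin m, (RsIrsAux.fold L f (u : ℕ)).comp L * X ^ (u : ℕ) = f := by
    intro f
    have h := RsIrsAux.fold_spec hLmonic hm1 f
    rw [hLdeg] at h
    rw [Fin.sum_univ_eq_sum_range (fun u => (RsIrsAux.fold L f u).comp L * X ^ u) m]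
    exact h
  have hfoldeq : ∀ (f : Polynomial F) (fu : Fin m → Polynomial F),
      f = ∑ u : Fin m, (fu u).comp L * X ^ (u : ℕ) →
      ∀ u : Fin m, RsIrsAux.fold L f (u : ℕ) = fu u := by
    intro f fu hf u
    have h := RsIrsAux.decomp_unique hLmonic hm1 hLdeg
      (fun u : Fin m => RsIrsAux.fold L f (u : ℕ)) fu (by rw [hdecomp f, ← hf])
    exact congrFun h u
  have hfwd : ∀ f : Polynomial F, f.degree < (k : WithBot ℕ) → ∀ u : Fin m,
      RsIrsAux.fold L f (u : ℕ) = 0 ∨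
      (((RsIrsAux.fold L f (u : ℕ)).natDegree : ℤ) <
        ((k : ℤ) - 1 - (u : ℕ)).fdiv (m : ℤ) + 1) := by
    intro f hf u
    rcases eq_or_ne (RsIrsAux.fold L f (u : ℕ)) 0 with h0 | h0
    · exact Or.inl h0
    right
    have hfne : f ≠ 0 := by rintro rfl; exact h0 (RsIrsAux.fold_zero L (u : ℕ))
    have hnf : f.natDegree < k := (Polynomial.natDegree_lt_iff_degree_lt hfne).2 hf
    have hfd := RsIrsAux.fold_deg hLmonic hm1 f (u : ℕ) h0
    rw [hLdeg] at hfd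
    set nd := (RsIrsAux.fold L f (u : ℕ)).natDegree with hnd
    have h3 : m * nd + (u : ℕ) < k := lt_of_le_of_lt hfd hnf
    have h4 : (nd : ℤ) * m ≤ (k : ℤ) - 1 - (u : ℕ) := by
      have h5 := (Nat.cast_lt (α := ℤ)).2 h3
      push_cast at h5
      linarith [mul_comm (m : ℤ) (nd : ℤ)]
    have hmz : (0 : ℤ) < m := by exact_mod_cast hm
    rw [Int.fdiv_eq_ediv_of_nonneg _ (le_of_lt hmz)]
    have h6 := (Int.le_ediv_iff_mul_le hmz).2 h4
    linarith
  have hbwd : ∀ (g : Polynomial F) (u : Fin m), g ≠ 0 →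
      ((g.natDegree : ℤ) < ((k : ℤ) - 1 - (u : ℕ)).fdiv (m : ℤ) + 1) →
      m * g.natDegree + (u : ℕ) + 1 ≤ k := by
    intro g u hg hlt
    have hmz : (0 : ℤ) < m := by exact_mod_cast hm
    rw [Int.fdiv_eq_ediv_of_nonneg _ (le_of_lt hmz)] at hlt
    have h1 : (g.natDegree : ℤ) ≤ ((k : ℤ) - 1 - (u : ℕ)) / m := Int.lt_add_one_iff.1 hlt
    have h2 := (Int.le_ediv_iff_mul_le hmz).1 h1
    have h3 : ((m * g.natDegree + (u : ℕ) + 1 : ℕ) : ℤ) ≤ (k : ℤ) := by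
      push_cast
      linarith [mul_comm (g.natDegree : ℤ) (m : ℤ)]
    exact_mod_cast h3
  have hndlt : ∀ f : Polynomial F, f.degree < (k : WithBot ℕ) → ∀ u : Fin m,
      (RsIrsAux.fold L f (u : ℕ)).natDegree < ns := by
    intro f hf u
    rcases eq_or_ne (RsIrsAux.fold L f (u : ℕ)) 0 with h0 | h0
    · rw [h0, natDegree_zero]; omega
    · have hfne : f ≠ 0 := by rintro rfl; exact h0 (RsIrsAux.fold_zero L (u : ℕ))
      have hnf : f.natDegree < k := (Polynomial.natDegree_lt_iff_degree_lt hfne).2 hf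
      have hfd := RsIrsAux.fold_deg hLmonic hm1 f (u : ℕ) h0
      rw [hLdeg] at hfd
      have h1 : m * (RsIrsAux.fold L f (u : ℕ)).natDegree < m * ns := by
        calc m * (RsIrsAux.fold L f (u : ℕ)).natDegree
            ≤ m * (RsIrsAux.fold L f (u : ℕ)).natDegree + (u : ℕ) := Nat.le_add_right _ _
          _ ≤ f.natDegree := hfd
          _ < k := hnf
          _ ≤ n := hkn
          _ = m * ns := hn
      exact lt_of_mul_lt_mul_left h1 (Nat.zero_le m)
  refine ⟨fun c => Matrix.of fun u j => (RsIrsAux.fold L (interp c) (u : ℕ)).eval (b j),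
    ⟨?_, ?_, ?_⟩, ?_⟩
  · -- MapsTo
    rintro c ⟨f, hfdeg, hfc⟩
    have hc : c = fun q => f.eval (a q) := funext hfc
    intro u
    refine ⟨RsIrsAux.fold L f (u : ℕ), hfwd f hfdeg u, fun j => ?_⟩
    simp only [Matrix.of_apply]
    rw [hc, hrecov f hfdeg]
  · -- InjOn
    rintro c1 ⟨f1, hf1, hc1⟩ c2 ⟨f2, hf2, hc2⟩ heq
    have e1 : interp c1 = f1 := by
      rw [show c1 = fun q => f1.eval (a q) from funext hc1]; exact hrecov f1 hf1
    have e2 : interp c2 = f2 := by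
      rw [show c2 = fun q => f2.eval (a q) from funext hc2]; exact hrecov f2 hf2
    have hfold : ∀ u : Fin m, RsIrsAux.fold L f1 (u : ℕ) = RsIrsAux.fold L f2 (u : ℕ) := by
      intro u
      have hvals : ∀ j : Fin ns,
          (RsIrsAux.fold L f1 (u : ℕ)).eval (b j) = (RsIrsAux.fold L f2 (u : ℕ)).eval (b j) := by
        intro j
        have h := congrFun (congrFun heq u) j
        simpa [Matrix.of_apply, e1, e2] using h
      have hd1 : (RsIrsAux.fold L f1 (u : ℕ)).degree < ((Finset.univ : Finset (Fin ns)).card : WithBot ℕ) := by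
        rw [hcardb]
        exact lt_of_le_of_lt degree_le_natDegree (by exact_mod_cast hndlt f1 hf1 u)
      have hd2 : (RsIrsAux.fold L f2 (u : ℕ)).degree < ((Finset.univ : Finset (Fin ns)).card : WithBot ℕ) := by
        rw [hcardb]
        exact lt_of_le_of_lt degree_le_natDegree (by exact_mod_cast hndlt f2 hf2 u)
      calc RsIrsAux.fold L f1 (u : ℕ)
          = Lagrange.interpolate Finset.univ b
              (fun j => (RsIrsAux.fold L f1 (u : ℕ)).eval (b j)) :=
            Lagrange.eq_interpolate hb.injOn hd1
        _ = Lagrange.interpolate Finset.univ b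
              (fun j => (RsIrsAux.fold L f2 (u : ℕ)).eval (b j)) := by
            congr 1; funext j; exact hvals j
        _ = RsIrsAux.fold L f2 (u : ℕ) := (Lagrange.eq_interpolate hb.injOn hd2).symm
    have hf12 : f1 = f2 := by
      rw [← hdecomp f1, ← hdecomp f2]
      exact Finset.sum_congr rfl fun u _ => by rw [hfold u]
    funext q
    rw [hc1 q, hc2 q, hf12]
  · -- SurjOn
    rintro M hM
    simp only [Set.mem_setOf_eq] at hM
    choose g hg1 hg2 using hM
    set f : Polynomial F := ∑ u : Fin m, (g u).comp L * X ^ (u : ℕ) with hf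
    have hfdeg : f.degree < (k : WithBot ℕ) := by
      rw [hf]
      refine lt_of_le_of_lt (degree_sum_le _ _) ?_
      have hbot : (⊥ : WithBot ℕ) < (k : WithBot ℕ) := bot_lt_iff_ne_bot.2 (by simp)
      rw [Finset.sup_lt_iff hbot]
      intro u _
      rcases eq_or_ne (g u) 0 with h0 | h0
      · simpa [h0] using hbot
      · have hterm := RsIrsAux.term_natDegree hm1 h0 (u : ℕ)
        have hb2 := hbwd (g u) u h0 ((hg1 u).resolve_left h0)
        refine lt_of_le_of_lt degree_le_natDegree ?_
        rw [hterm, hLdeg]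
        exact_mod_cast (show m * (g u).natDegree + (u : ℕ) < k by omega)
    refine ⟨fun q => f.eval (a q), ⟨f, hfdeg, fun q => rfl⟩, ?_⟩
    have e : interp (fun q => f.eval (a q)) = f := hrecov f hfdeg
    funext u j
    simp only [Matrix.of_apply]
    rw [e, hfoldeq f g hf u, hg2 u j]
  · -- compatibility
    intro f hfdeg fu hfu
    have e : interp (fun q => f.eval (a q)) = f := hrecov f hfdeg
    funext u j
    simp only [Matrix.of_apply]
    rw [e, hfoldeq f fu hfu u]
end

section
/- Let F_q be a finite field, a_1,…,a_n ∈ F_q pairwise distinct, 1 ≤ k ≤ n, and m ≥ 1. Let IRS_m(n,k) denote the set of m×n matrices over F_q each of whose rows is a codeword of RS[n,k] = {(f(a_1),…,f(a_n)) : f ∈ F_q[X], deg f < k}. Then for every R ∈ F_q^{m×n}, the number of codewords C ∈ IRS_m(n,k) such that R − C is an (n−k)-burst matrix is at most k + 1. In particular IRS_m(n,k) is (1 − k/n, O(n))-burst list-decodable. (Lemma 4.3 of the paper.) -/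
open Polynomial

/-- Lemma 4.3 of the paper. For every received matrix `R`,
the number of codewords `C` of the `m`-interleaved Reed–Solomon code
`IRS_m(n,k)` such that `R - C` is an `(n-k)`-burst matrix is at most `k + 1`. -/
theorem irs_burst_list_decodable
    (F : Type*) [Field F] [Fintype F] [DecidableEq F]
    (n k m : ℕ) (hm : 1 ≤ m) (hk : 1 ≤ k) (hkn : k ≤ n)
    (a : Fin n → F) (ha : Function.Injective a)
    (R : Matrix (Fin m) (Fin n) F) :
    Set.ncard {C : Matrix (Fin m) (Fin n) F |
        (∀ i : Fin m, ∃ f : Polynomial F, f.degree < k ∧ ∀ j, C i j = f.eval (a j)) ∧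
        (∀ j j' : Fin n, (∃ i, (R - C) i j ≠ 0) → (∃ i, (R - C) i j' ≠ 0) →
          (j' : ℕ) - (j : ℕ) < n - k)} ≤ k + 1 := by
  classical
  set S : Set (Matrix (Fin m) (Fin n) F) := {C : Matrix (Fin m) (Fin n) F |
        (∀ i : Fin m, ∃ f : Polynomial F, f.degree < k ∧ ∀ j, C i j = f.eval (a j)) ∧
        (∀ j j' : Fin n, (∃ i, (R - C) i j ≠ 0) → (∃ i, (R - C) i j' ≠ 0) →
          (j' : ℕ) - (j : ℕ) < n - k)} with hS
  -- the set of nonzero columns of R - C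
  set J : Matrix (Fin m) (Fin n) F → Finset (Fin n) := fun C =>
    Finset.univ.filter (fun j : Fin n => ∃ i, (R - C) i j ≠ 0) with hJ
  -- the (clamped) start of the burst window
  set t : Matrix (Fin m) (Fin n) F → ℕ := fun C =>
    if h : (J C).Nonempty then min (((J C).min' h : Fin n) : ℕ) k else 0 with ht
  have htk : ∀ C, t C ≤ k := by
    intro C
    rw [ht]
    dsimp only
    split
    · exact min_le_right _ _
    · exact Nat.zero_le _
  -- columns outside the window agree with R
  have key : ∀ C ∈ S, ∀ j : Fin n, ((j : ℕ) < t C ∨ t C + (n - k) ≤ (j : ℕ)) →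
      ∀ i, C i j = R i j := by
    intro C hC j hj i
    by_contra hne
    have hjne : (R - C) i j ≠ 0 := by
      simp only [Matrix.sub_apply, ne_eq, sub_eq_zero]
      exact fun h => hne h.symm
    have hjJ : j ∈ J C := by
      rw [hJ]; simp only [Finset.mem_filter, Finset.mem_univ, true_and]
      exact ⟨i, hjne⟩
    have hne' : (J C).Nonempty := ⟨j, hjJ⟩
    set s : Fin n := (J C).min' hne' with hs
    have hsJ : s ∈ J C := (J C).min'_mem hne'
    have hsle : (s : ℕ) ≤ (j : ℕ) := (J C).min'_le j hjJ
    obtain ⟨i0, hi0⟩ : ∃ i, (R - C) i s ≠ 0 := by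
      have := hsJ
      rw [hJ] at this
      simp only [Finset.mem_filter, Finset.mem_univ, true_and] at this
      exact this
    have hburst : (j : ℕ) - (s : ℕ) < n - k := hC.2 s j ⟨i0, hi0⟩ ⟨i, hjne⟩
    have htC : t C = min (s : ℕ) k := by
      rw [ht]
      dsimp only
      rw [dif_pos hne']
    have hjn : (j : ℕ) < n := j.isLt
    rw [htC] at hj
    omega
  -- the map C ↦ t C, as an element of Fin (k+1)
  have hmain : S.ncard ≤ (Set.univ : Set (Fin (k + 1))).ncard := by
    apply Set.ncard_le_ncard_of_injOn (fun C => (⟨t C, Nat.lt_succ_of_le (htk C)⟩ : Fin (k + 1)))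
    · intro C _; exact Set.mem_univ _
    · -- injectivity on S
      intro C hC C' hC' hCC'
      have htt : t C = t C' := by
        have := congrArg (Fin.val) hCC'
        simpa using this
      -- k columns outside the common window
      have hφlt : ∀ x : Fin k, (x : ℕ) < t C → (x : ℕ) < n := fun x _ =>
        lt_of_lt_of_le x.isLt hkn
      have hφlt' : ∀ x : Fin k, (x : ℕ) + (n - k) < n := fun x => by
        have := x.isLt; omega
      set φ : Fin k → Fin n := fun x =>
        if h : (x : ℕ) < t C then ⟨x, hφlt x h⟩ else ⟨(x : ℕ) + (n - k), hφlt' x⟩ with hφ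
      have hφout : ∀ x : Fin k, ((φ x : ℕ) < t C ∨ t C + (n - k) ≤ (φ x : ℕ)) := by
        intro x
        rw [hφ]
        dsimp only
        split
        · left; assumption
        · right
          simp only []
          omega
      have hv : ∀ x : Fin k, ((φ x : Fin n) : ℕ) =
          if (x : ℕ) < t C then (x : ℕ) else (x : ℕ) + (n - k) := by
        intro x
        rw [hφ]
        dsimp only
        split <;> rfl
      have hφinj : Function.Injective φ := by
        intro x y hxy
        have hxy' := congrArg (Fin.val) hxy
        rw [hv x, hv y] at hxy'
        have hx := x.isLt
        have hy := y.isLt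
        have htkC := htk C
        apply Fin.ext
        split at hxy' <;> split at hxy' <;> omega
      -- rows agree
      funext i j
      obtain ⟨f, hfd, hfe⟩ := hC.1 i
      obtain ⟨g, hgd, hge⟩ := hC'.1 i
      have heq : f = g := by
        by_cases hfg : f - g = 0
        · exact sub_eq_zero.mp hfg
        have hdeg : (f - g).degree < (k : ℕ) := lt_of_le_of_lt (degree_sub_le f g)
          (max_lt hfd hgd)
        have hnd : (f - g).natDegree < k := (natDegree_lt_iff_degree_lt hfg).mpr hdeg
        have heval : ∀ x : Fin k, (f - g).eval ((a ∘ φ) x) = 0 := by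
          intro x
          have h1 : C i (φ x) = R i (φ x) := key C hC (φ x) (hφout x) i
          have h2 : C' i (φ x) = R i (φ x) := by
            apply key C' hC' (φ x) _ i
            rw [← htt]
            exact hφout x
          simp only [eval_sub, Function.comp_apply]
          rw [← hfe, ← hge, h1, h2, sub_self]
        have := Polynomial.eq_zero_of_natDegree_lt_card_of_eval_eq_zero (f - g)
          (ha.comp hφinj) heval (by simpa using hnd)
        exact absurd this hfg
      rw [hfe j, hge j, heq]
  calc S.ncard ≤ (Set.univ : Set (Fin (k + 1))).ncard := hmain
    _ = k + 1 := by simp [Set.ncard_univ]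
end

section
/- Let F_q be a finite field and let m, u be positive integers with n = m·u. If e ∈ F_q^n is an ℓ-burst for some 0 ≤ ℓ ≤ n, then the m×u matrix E over F_q defined by E_{i,j} = e_{(j−1)m+i} (folding e into columns of length m) is a (⌊ℓ/m⌋ + 2)-burst matrix. (Lemma 2.6 of the paper.) -/
/-- Lemma 2.6 of the paper. Folding an `ℓ`-burst vector
`e ∈ F^{m·u}` into an `m × u` matrix `E` (with `E i j = e ((j)m + i)`, columns
of length `m`) yields a `(⌊ℓ/m⌋ + 2)`-burst matrix. -/
theorem fold_burst
    (F : Type*) [Field F] (m u : ℕ) (hm : 0 < m) (hu : 0 < u)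
    (e : Fin (m * u) → F) (ℓ : ℕ) (hℓ : ℓ ≤ m * u)
    (hburst : ∀ i j : Fin (m * u), e i ≠ 0 → e j ≠ 0 → (j : ℕ) - (i : ℕ) < ℓ)
    (idx : Fin m → Fin u → Fin (m * u))
    (hidx : ∀ i j, (idx i j : ℕ) = (j : ℕ) * m + (i : ℕ))
    (E : Matrix (Fin m) (Fin u) F)
    (hE : ∀ i j, E i j = e (idx i j)) :
    ∀ j j' : Fin u, (∃ i, E i j ≠ 0) → (∃ i, E i j' ≠ 0) →
      (j' : ℕ) - (j : ℕ) < ℓ / m + 2 := by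
  intro j j' ⟨i, hi⟩ ⟨i', hi'⟩
  rw [hE] at hi hi'
  have hb := hburst (idx i j) (idx i' j') hi hi'
  rw [hidx, hidx] at hb
  rcases le_or_gt (j' : ℕ) (j : ℕ) with h | h
  · rw [Nat.sub_eq_zero_of_le h]; exact Nat.succ_pos _
  · -- j < j'; write j' = j + c + 1
    obtain ⟨c, hc⟩ : ∃ c, (j' : ℕ) = (j : ℕ) + c + 1 := ⟨(j' : ℕ) - (j : ℕ) - 1, by omega⟩
    have hmul : (j' : ℕ) * m = (j : ℕ) * m + c * m + m := by rw [hc]; ring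
    have hcm : c * m ≤ ℓ := by
      have hi_lt : (i : ℕ) < m := i.isLt
      omega
    have : c ≤ ℓ / m := (Nat.le_div_iff_mul_le hm).2 hcm
    omega
end

section
/- Let F_q be a finite field, let L ∈ F_q[X] be monic of degree m ≥ 1, and let b_1,…,b_{n_s} ∈ F_q be pairwise distinct such that each fiber P[j] = {a ∈ F_q : L(a) = b_j} has exactly m elements. Set n = m·n_s, enumerate the evaluation points a_1,…,a_n fiber by fiber, and let 1 ≤ k ≤ n. Let f ∈ F_q[X] with deg f < k, write f = Σ_{u=0}^{m−1} f_u(L(X))·X^u, let c = (f(a_1),…,f(a_n)), and let r = c + e where e ∈ F_q^n is an ℓ-burst. For each j let g_j = Σ_{u=0}^{m−1} g_{u,j} X^u be the unique polynomial of degree < m that agrees with the j-th block of r on the m points of P[j] (i.e. g_j(a_{(j−1)m+i}) = r_{(j−1)m+i} for 1 ≤ i ≤ m). Then for every j we have (g_{0,j},…,g_{m−1,j}) = (f_0(b_j),…,f_{m−1}(b_j)) if and only if the j-th block (e_{(j−1)m+1},…,e_{jm}) of e is zero; moreover the set J = {j : the j-th block of e is nonzero}, if nonempty, satisfies max J − min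 J < ⌊ℓ/m⌋ + 2. -/
open Polynomial

/-- The central reduction step: under the fold-then-interpolate
map, an `ℓ`-burst error `e` on a Reed–Solomon codeword corresponds to a set of
corrupted columns of the interleaved code; column `j` is uncorrupted (i.e. the
coefficients of the local interpolant `g_j` equal `(f_0(b_j),…,f_{m-1}(b_j))`)
exactly when block `j` of `e` is zero, and the corrupted columns span an
interval of width `< ⌊ℓ/m⌋ + 2`. -/
theorem burst_reduction
    (F : Type*) [Field F] [Fintype F] [DecidableEq F]
    (m ns n k : ℕ) (hm : 1 ≤ m) (hn : n = m * ns)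
    (L : Polynomial F) (hLmonic : L.Monic) (hLdeg : L.natDegree = m)
    (b : Fin ns → F) (hb : Function.Injective b)
    (hfiber : ∀ j : Fin ns,
      (Finset.univ.filter (fun x : F => L.eval x = b j)).card = m)
    (a : Fin n → F) (ha : Function.Injective a)
    (idx : Fin m → Fin ns → Fin n)
    (hidx : ∀ i j, (idx i j : ℕ) = (j : ℕ) * m + (i : ℕ))
    (hblock : ∀ i j, L.eval (a (idx i j)) = b j)
    (hk : 1 ≤ k) (hkn : k ≤ n)
    (f : Polynomial F) (hfdeg : f.degree < k)
    (fu : Fin m → Polynomial F)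
    (hdecomp : f = ∑ u : Fin m, (fu u).comp L * X ^ (u : ℕ))
    (c r e : Fin n → F)
    (hc : ∀ q, c q = f.eval (a q)) (hr : r = c + e)
    (ℓ : ℕ)
    (hburst : ∀ i j : Fin n, e i ≠ 0 → e j ≠ 0 → (j : ℕ) - (i : ℕ) < ℓ)
    (g : Fin ns → Polynomial F)
    (hgdeg : ∀ j, (g j).degree < m)
    (hg : ∀ j i, (g j).eval (a (idx i j)) = r (idx i j)) :
    (∀ j : Fin ns,
      (∀ u : Fin m, (g j).coeff (u : ℕ) = (fu u).eval (b j)) ↔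
        (∀ i : Fin m, e (idx i j) = 0)) ∧
    (∀ hJ : (Finset.univ.filter
        (fun j : Fin ns => ∃ i : Fin m, e (idx i j) ≠ 0)).Nonempty,
      (((Finset.univ.filter
          (fun j : Fin ns => ∃ i : Fin m, e (idx i j) ≠ 0)).max' hJ : ℕ) -
        ((Finset.univ.filter
          (fun j : Fin ns => ∃ i : Fin m, e (idx i j) ≠ 0)).min' hJ : ℕ)
        < ℓ / m + 2)) := by
  classical
  have hm0 : m ≠ 0 := by omega
  have he' : ∀ q, e q = r q - c q := by
    intro q
    have hq : r q = c q + e q := by rw [hr]; rfl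
    rw [hq]; ring
  have hinj : ∀ j : Fin ns, Function.Injective (fun i : Fin m => a (idx i j)) := by
    intro j i1 i2 hhe
    have h1 : idx i1 j = idx i2 j := ha hhe
    have h2 : (idx i1 j : ℕ) = (idx i2 j : ℕ) := by rw [h1]
    rw [hidx, hidx] at h2
    exact Fin.ext (by omega)
  set h : Fin ns → Polynomial F :=
    fun j => ∑ u : Fin m, C ((fu u).eval (b j)) * X ^ (u : ℕ) with hh
  have hhdeg : ∀ j, (h j).degree < (m : ℕ) := by
    intro j
    refine lt_of_le_of_lt (degree_sum_le _ _) ?_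
    rw [Finset.sup_lt_iff (by exact_mod_cast WithBot.bot_lt_coe m)]
    intro u _
    exact lt_of_le_of_lt (degree_C_mul_X_pow_le _ _) (by exact_mod_cast u.isLt)
  have hhcoeff : ∀ j (u : Fin m), (h j).coeff (u : ℕ) = (fu u).eval (b j) := by
    intro j u
    rw [hh]
    simp only [finset_sum_coeff]
    rw [Finset.sum_eq_single u]
    · simp
    · intro v _ hvu
      have hne : (u : ℕ) ≠ (v : ℕ) := fun hcc => hvu (Fin.ext hcc.symm)
      simp [coeff_X_pow, hne]
    · simp
  have hheval : ∀ j i, (h j).eval (a (idx i j)) = f.eval (a (idx i j)) := by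
    intro j i
    rw [hdecomp, hh]
    simp [eval_finset_sum, eval_comp, hblock]
  have huniq : ∀ j, (∀ i, (g j).eval (a (idx i j)) = (h j).eval (a (idx i j))) →
      g j = h j := by
    intro j heq
    have hd : (g j - h j).degree < (m : ℕ) :=
      lt_of_le_of_lt (degree_sub_le _ _) (max_lt (hgdeg j) (hhdeg j))
    by_cases hz : g j - h j = 0
    · exact sub_eq_zero.mp hz
    · have hnd : (g j - h j).natDegree < m := by
        rw [natDegree_lt_iff_degree_lt hz]; exact hd
      have h0 := eq_zero_of_natDegree_lt_card_of_eval_eq_zero (g j - h j) (hinj j)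
        (fun i => by simp [heq i]) (by simpa using hnd)
      exact sub_eq_zero.mp h0
  have hmain : ∀ j : Fin ns, g j = h j ↔ (∀ i : Fin m, e (idx i j) = 0) := by
    intro j
    constructor
    · intro hgh i
      rw [he' (idx i j), ← hg j i, hgh, hheval j i, hc (idx i j)]
      ring
    · intro hez
      refine huniq j (fun i => ?_)
      rw [hg j i, hheval j i]
      have h0 := he' (idx i j)
      rw [hez i] at h0
      have hrc : r (idx i j) = c (idx i j) := sub_eq_zero.mp h0.symm
      rw [hrc, hc]
  constructor
  · intro j
    rw [← hmain j]
    constructor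
    · intro hcoef
      ext t
      by_cases ht : t < m
      · have h1 := hcoef ⟨t, ht⟩
        have h2 := hhcoeff j ⟨t, ht⟩
        exact h1.trans h2.symm
      · push_neg at ht
        rw [coeff_eq_zero_of_degree_lt (lt_of_lt_of_le (hgdeg j) (by exact_mod_cast ht)),
          coeff_eq_zero_of_degree_lt (lt_of_lt_of_le (hhdeg j) (by exact_mod_cast ht))]
    · intro hgh u
      rw [hgh]
      exact hhcoeff j u
  · intro hJ
    set S := Finset.univ.filter (fun j : Fin ns => ∃ i : Fin m, e (idx i j) ≠ 0) with hS
    obtain ⟨i1, hi1⟩ := (Finset.mem_filter.mp (S.max'_mem hJ)).2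
    obtain ⟨i2, hi2⟩ := (Finset.mem_filter.mp (S.min'_mem hJ)).2
    have hle : S.min' hJ ≤ S.max' hJ := S.min'_le _ (S.max'_mem hJ)
    have hbu := hburst _ _ hi2 hi1
    rw [hidx, hidx] at hbu
    set A := ((S.max' hJ : Fin ns) : ℕ) with hA
    set B := ((S.min' hJ : Fin ns) : ℕ) with hB
    have hBA : B ≤ A := hle
    have hkey : (A - B) * m < ℓ + m := by
      have h1 : (i1 : ℕ) < m := i1.isLt
      have h2 : (i2 : ℕ) < m := i2.isLt
      have hsub : (A - B) * m = A * m - B * m := Nat.sub_mul _ _ _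
      have hy : B * m ≤ A * m := Nat.mul_le_mul_right _ hBA
      generalize (A - B) * m = z at hsub ⊢
      generalize A * m = x at hbu hsub hy
      generalize B * m = y at hbu hsub hy
      omega
    by_contra hcon
    push_neg at hcon
    have h3 : (ℓ / m + 2) * m ≤ (A - B) * m := Nat.mul_le_mul_right _ hcon
    have h4 : m * (ℓ / m) + ℓ % m = ℓ := Nat.div_add_mod ℓ m
    have h5 : ℓ % m < m := Nat.mod_lt _ (by omega)
    nlinarith [hkey, h3, h4, h5]
end

section
/- Let ℓ be a prime power and F_q = F_{ℓ^u}. Let T be a multiplicative subgroup of F_ℓ^* of order t, let W ⊆ F_q be an F_ℓ-linear subspace of dimension w, and let L(X) = ∏_{α∈W}(X − α) ∈ F_q[X]. Then for every γ ∈ F_q with L(γ) ≠ 0, the set of roots in F_q of the polynomial L(X)^t − L(γ)^t is exactly {u·(γ + v) : u ∈ T, v ∈ W}, and this set has exactly t·ℓ^w elements. (Lemma 4.1 of the paper: the places x_r − L(γ)^t split completely, with the places lying above them given by these evaluation points.) -/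
open Polynomial

/-- Lemma 4.1 of the paper. Let `F = F_{ℓ^u}`, `T ≤ F_ℓ^*` a
multiplicative subgroup of order `t`, `W ⊆ F` an `F_ℓ`-subspace of dimension
`w` (i.e. of cardinality `ℓ^w`), and `L(X) = ∏_{α∈W}(X-α)`. For every `γ` with
`L(γ) ≠ 0`, the roots in `F` of `L(X)^t - L(γ)^t` are exactly
`{c·(γ+v) : c ∈ T, v ∈ W}`, a set of exactly `t·ℓ^w` elements. -/
theorem subspace_poly_roots
    (F : Type*) [Field F] [Fintype F] [DecidableEq F]
    (ℓ u : ℕ) (hℓ : IsPrimePow ℓ) (hF : Fintype.card F = ℓ ^ u)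
    (K : Subfield F) (hK : Nat.card K = ℓ)
    (T : Subgroup Fˣ) (hT : ∀ x : Fˣ, x ∈ T → (x : F) ∈ K)
    (t : ℕ) (ht : Nat.card T = t)
    (W : Submodule K F) (w : ℕ) (hW : Nat.card W = ℓ ^ w)
    (L : Polynomial F)
    (hL : L = ∏ α ∈ (Set.toFinite (W : Set F)).toFinset, (X - C α))
    (γ : F) (hγ : L.eval γ ≠ 0) :
    {x : F | (L.eval x) ^ t = (L.eval γ) ^ t} =
      {x : F | ∃ c : Fˣ, c ∈ T ∧ ∃ v ∈ W, x = (c : F) * (γ + v)} ∧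
    Set.ncard {x : F | (L.eval x) ^ t = (L.eval γ) ^ t} = t * ℓ ^ w := by
  classical
  set WF : Finset F := (Set.toFinite (W : Set F)).toFinset with hWFdef
  have hmemW : ∀ a : F, a ∈ WF ↔ a ∈ W := by
    intro a; simp only [hWFdef, Set.Finite.mem_toFinset, SetLike.mem_coe]
  have hcardWF : WF.card = ℓ ^ w := by
    rw [← hW, ← SetLike.coe_sort_coe, Nat.card_coe_set_eq,
      Set.ncard_eq_toFinset_card (W : Set F) (Set.toFinite _)]
  set TF : Finset Fˣ := (Set.toFinite (T : Set Fˣ)).toFinset with hTFdef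
  have hmemT : ∀ c : Fˣ, c ∈ TF ↔ c ∈ T := by
    intro c; simp only [hTFdef, Set.Finite.mem_toFinset, SetLike.mem_coe]
  have hcardTF : TF.card = t := by
    rw [← ht, ← SetLike.coe_sort_coe, Nat.card_coe_set_eq,
      Set.ncard_eq_toFinset_card (T : Set Fˣ) (Set.toFinite _)]
  have ht1 : 0 < t := ht ▸ Nat.card_pos
  have hℓ2 : 2 ≤ ℓ := hℓ.two_le
  -- translation invariance
  have htrans : ∀ x v : F, v ∈ W → L.eval (x + v) = L.eval x := by
    intro x v hv
    rw [hL, eval_prod, eval_prod]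
    simp only [eval_sub, eval_X, eval_C]
    refine Finset.prod_nbij' (fun a => a - v) (fun a => a + v) ?_ ?_ ?_ ?_ ?_
    · intro a ha; rw [hmemW] at *; exact W.sub_mem ha hv
    · intro a ha; rw [hmemW] at *; exact W.add_mem ha hv
    · intro a _; ring
    · intro a _; ring
    · intro a _; ring
  -- powers of elements of K
  have hpowK : ∀ n : ℕ, ∀ c : F, c ∈ K → c ^ ℓ ^ n = c := by
    have base : ∀ c : F, c ∈ K → c ^ ℓ = c := by
      intro c hc
      haveI : Fintype K := Fintype.ofFinite K
      have hcard : Fintype.card K = ℓ := by rw [← hK, Nat.card_eq_fintype_card]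
      have h := FiniteField.pow_card (⟨c, hc⟩ : K)
      rw [hcard] at h
      have h2 := congrArg (fun x : K => (x : F)) h
      simpa using h2
    intro n
    induction n with
    | zero => intro c hc; simp
    | succ n ih =>
      intro c hc
      rw [pow_succ, pow_mul, ih c hc, base c hc]
  -- scaling
  have hscale : ∀ x c : F, c ∈ K → c ≠ 0 → L.eval (c * x) = c * L.eval x := by
    intro x c hc hc0
    have key : L.eval (c * x) = c ^ ℓ ^ w * L.eval x := by
      rw [hL, eval_prod, eval_prod, ← hcardWF, ← Finset.prod_const,
        ← Finset.prod_mul_distrib]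
      simp only [eval_sub, eval_X, eval_C]
      refine Finset.prod_nbij' (fun a => c⁻¹ * a) (fun a => c * a) ?_ ?_ ?_ ?_ ?_
      · intro a ha
        rw [hmemW] at *
        have := W.smul_mem (⟨c⁻¹, K.inv_mem hc⟩ : K) ha
        rwa [Algebra.smul_def] at this
      · intro a ha
        rw [hmemW] at *
        have := W.smul_mem (⟨c, hc⟩ : K) ha
        rwa [Algebra.smul_def] at this
      · intro a _; field_simp
      · intro a _; field_simp
      · intro a _; field_simp
    rw [key, hpowK w c hc]
  -- elements of T have t-th power 1
  have hct : ∀ c : Fˣ, c ∈ T → (c : F) ^ t = 1 := by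
    intro c hc
    have : (⟨c, hc⟩ : T) ^ t = 1 := by rw [← ht]; exact pow_card_eq_one'
    have := congrArg (fun x : T => ((x : Fˣ) : F)) this
    simpa using this
  -- evaluation at points of the claimed set
  have heval : ∀ c : Fˣ, c ∈ T → ∀ v : F, v ∈ W →
      L.eval ((c : F) * (γ + v)) = (c : F) * L.eval γ := by
    intro c hc v hv
    rw [hscale (γ + v) (c : F) (hT c hc) c.ne_zero, htrans γ v hv]
  -- the polynomial
  set p : Polynomial F := L ^ t - C (L.eval γ ^ t) with hpdef
  have hLmonic : L.Monic := by
    rw [hL]; exact monic_prod_of_monic _ _ (fun a _ => monic_X_sub_C a)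
  have hLdeg : L.natDegree = ℓ ^ w := by
    rw [hL, natDegree_prod _ _ (fun a _ => X_sub_C_ne_zero a)]
    simp [hcardWF]
  have hpdeg : p.natDegree = t * ℓ ^ w := by
    rw [hpdef, natDegree_sub_C, natDegree_pow, hLdeg, mul_comm]
  have hp0 : p ≠ 0 := by
    intro h
    have : p.natDegree = 0 := by rw [h, natDegree_zero]
    rw [hpdeg] at this
    have : 0 < t * ℓ ^ w := Nat.mul_pos ht1 (pow_pos (by omega) w)
    omega
  have hset : {x : F | (L.eval x) ^ t = (L.eval γ) ^ t} = ↑p.roots.toFinset := by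
    ext x
    rw [Set.mem_setOf_eq, Finset.mem_coe, Multiset.mem_toFinset, mem_roots hp0]
    simp only [IsRoot, hpdef, eval_sub, eval_pow, eval_C, sub_eq_zero]
  -- the image finset
  set f : Fˣ × F → F := fun pr => (pr.1 : F) * (γ + pr.2) with hfdef
  set S : Finset F := Finset.image f (TF ×ˢ WF) with hSdef
  have hinj : Set.InjOn f ↑(TF ×ˢ WF) := by
    rintro ⟨c, v⟩ hm ⟨c', v'⟩ hm' heq
    simp only [Finset.coe_product, Set.mem_prod, Finset.mem_coe, hmemT, hmemW] at hm hm'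
    have h1 := heval c hm.1 v hm.2
    have h2 := heval c' hm'.1 v' hm'.2
    simp only [hfdef] at heq
    rw [heq, h2] at h1
    have hcc : (c' : F) = (c : F) := mul_right_cancel₀ hγ h1
    have hcc' : c' = c := Units.ext hcc
    subst hcc'
    have hvv : v = v' := add_left_cancel (mul_left_cancel₀ c'.ne_zero heq)
    simp [hvv]
  have hScard : S.card = t * ℓ ^ w := by
    rw [hSdef, Finset.card_image_of_injOn hinj, Finset.card_product, hcardTF, hcardWF]
  have hSsub : (↑S : Set F) ⊆ {x : F | (L.eval x) ^ t = (L.eval γ) ^ t} := by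
    intro x hx
    simp only [hSdef, Finset.coe_image, Set.mem_image, Finset.mem_coe,
      Finset.mem_product] at hx
    obtain ⟨⟨c, v⟩, ⟨hc, hv⟩, rfl⟩ := hx
    rw [hmemT] at hc; rw [hmemW] at hv
    show (L.eval (f (c, v))) ^ t = _
    rw [hfdef]
    simp only
    rw [heval c hc v hv, mul_pow, hct c hc, one_mul]
  have hfin : {x : F | (L.eval x) ^ t = (L.eval γ) ^ t}.Finite := Set.toFinite _
  have hncard_le : {x : F | (L.eval x) ^ t = (L.eval γ) ^ t}.ncard ≤ t * ℓ ^ w := by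
    rw [hset, Set.ncard_coe_finset]
    calc p.roots.toFinset.card ≤ Multiset.card p.roots := Multiset.toFinset_card_le _
      _ ≤ p.natDegree := card_roots' p
      _ = t * ℓ ^ w := hpdeg
  have hSeq : (↑S : Set F) = {x : F | (L.eval x) ^ t = (L.eval γ) ^ t} := by
    refine Set.eq_of_subset_of_ncard_le hSsub ?_ hfin
    rw [Set.ncard_coe_finset, hScard]
    exact hncard_le
  constructor
  · rw [← hSeq]
    ext x
    simp only [hSdef, Finset.coe_image, Set.mem_image, Finset.mem_coe,
      Finset.mem_product, Set.mem_setOf_eq, hfdef]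
    constructor
    · rintro ⟨⟨c, v⟩, ⟨hc, hv⟩, rfl⟩
      exact ⟨c, (hmemT c).mp hc, v, (hmemW v).mp hv, rfl⟩
    · rintro ⟨c, hc, v, hv, rfl⟩
      exact ⟨(c, v), ⟨(hmemT c).mpr hc, (hmemW v).mpr hv⟩, rfl⟩
  · rw [← hSeq, Set.ncard_coe_finset, hScard]
end

section
/- Let ℓ be a prime power, F_q = F_{ℓ^u}, T a multiplicative subgroup of F_ℓ^* of order t, W ⊆ F_q an F_ℓ-linear subspace, L(X) = ∏_{α∈W}(X − α), and γ ∈ F_q with L(γ) ≠ 0. Let n_s be a positive integer dividing t. Then {L(a)^{t/n_s} : a ∈ F_q, L(a)^t = L(γ)^t} = {ω·L(γ)^{t/n_s} : ω ∈ F_q, ω^{n_s} = 1}; that is, the image of the root set of L(X)^t − L(γ)^t under the map a ↦ L(a)^{t/n_s} is a coset of the group of n_s-th roots of unity in F_q^*, and it has exactly n_s elements. -/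
open Polynomial

/-- Any root of `X^ℓ - X` lies in the subfield `K` of cardinality `ℓ`. -/
lemma aux_mem_subfield_of_pow {F : Type*} [Field F] [Fintype F] [DecidableEq F]
    {ℓ : ℕ} (hℓ2 : 2 ≤ ℓ) (K : Subfield F) (hK : Nat.card K = ℓ)
    {β : F} (hβ : β ^ ℓ = β) : β ∈ K := by
  classical
  haveI : Fintype K := Fintype.ofFinite K
  set p : Polynomial F := X ^ ℓ - X with hp
  have hdegX : (X : Polynomial F).natDegree < (X ^ ℓ : Polynomial F).natDegree := by
    simp only [natDegree_X, natDegree_X_pow]; omega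
  have hdeg : p.natDegree = ℓ := by
    rw [hp, natDegree_sub_eq_left_of_natDegree_lt hdegX, natDegree_X_pow]
  have hpne : p ≠ 0 := by
    intro h
    rw [h, natDegree_zero] at hdeg
    omega
  have hroot : ∀ x : F, x ∈ K → x ∈ p.roots.toFinset := by
    intro x hx
    have : (⟨x, hx⟩ : K) ^ ℓ = ⟨x, hx⟩ := by
      have hc : Fintype.card K = ℓ := by rw [← Nat.card_eq_fintype_card, hK]
      rw [← hc]; exact FiniteField.pow_card _
    have hxp : x ^ ℓ = x := by
      have := congrArg (Subtype.val) this
      simpa using this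
    rw [Multiset.mem_toFinset, mem_roots hpne]
    simp only [Multiset.mem_toFinset, mem_roots hpne, IsRoot.def, hp, eval_sub, eval_pow,
      eval_X, hxp, sub_self]
  by_contra hβK
  have hβroot : β ∈ p.roots.toFinset := by
    rw [Multiset.mem_toFinset, mem_roots hpne]
    simp only [Multiset.mem_toFinset, mem_roots hpne, IsRoot.def, hp, eval_sub, eval_pow,
      eval_X, hβ, sub_self]
  set KF : Finset F := (Set.toFinite (K : Set F)).toFinset with hKF
  have hKFcard : KF.card = ℓ := by
    rw [hKF, Set.Finite.card_toFinset, ← hK]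
    exact Nat.card_eq_fintype_card.symm
  have hsub : insert β KF ⊆ p.roots.toFinset := by
    intro x hx
    rcases Finset.mem_insert.mp hx with h | h
    · exact h ▸ hβroot
    · exact hroot x ((Set.toFinite (K : Set F)).mem_toFinset.mp h)
  have hβKF : β ∉ KF := by
    rw [hKF, Set.Finite.mem_toFinset]
    exact hβK
  have hcard1 : (insert β KF).card = ℓ + 1 := by
    rw [Finset.card_insert_of_notMem hβKF, hKFcard]
  have hcard2 : p.roots.toFinset.card ≤ ℓ := by
    calc p.roots.toFinset.card ≤ Multiset.card p.roots := p.roots.toFinset_card_le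
    _ ≤ p.natDegree := p.card_roots'
    _ = ℓ := hdeg
  have := Finset.card_le_card hsub
  omega

/-- With `L` the subspace polynomial of the `F_ℓ`-subspace `W`,
`T ≤ F_ℓ^*` of order `t`, `γ` with `L(γ) ≠ 0`, and `n_s ∣ t`: the image of the
root set of `L(X)^t - L(γ)^t` under `a ↦ L(a)^{t/n_s}` is exactly the coset
`{ω·L(γ)^{t/n_s} : ω^{n_s} = 1}` of the `n_s`-th roots of unity, and it has
exactly `n_s` elements. -/
theorem subspace_poly_image_coset
    (F : Type*) [Field F] [Fintype F] [DecidableEq F]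
    (ℓ u : ℕ) (hℓ : IsPrimePow ℓ) (hF : Fintype.card F = ℓ ^ u)
    (K : Subfield F) (hK : Nat.card K = ℓ)
    (T : Subgroup Fˣ) (hT : ∀ x : Fˣ, x ∈ T → (x : F) ∈ K)
    (t : ℕ) (ht : Nat.card T = t)
    (W : Submodule K F)
    (L : Polynomial F)
    (hL : L = ∏ α ∈ (Set.toFinite (W : Set F)).toFinset, (X - C α))
    (γ : F) (hγ : L.eval γ ≠ 0)
    (ns : ℕ) (hns : 0 < ns) (hdvd : ns ∣ t) :
    {z : F | ∃ x : F, (L.eval x) ^ t = (L.eval γ) ^ t ∧ z = (L.eval x) ^ (t / ns)} =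
      {z : F | ∃ ω : F, ω ^ ns = 1 ∧ z = ω * (L.eval γ) ^ (t / ns)} ∧
    Set.ncard {z : F | ∃ x : F,
        (L.eval x) ^ t = (L.eval γ) ^ t ∧ z = (L.eval x) ^ (t / ns)} = ns := by
  classical
  haveI : Fintype K := Fintype.ofFinite K
  haveI : Fintype W := Fintype.ofFinite W
  have hℓ2 : 2 ≤ ℓ := hℓ.two_le
  have ht0 : 0 < t := ht ▸ Nat.card_pos
  have hcardK : Fintype.card K = ℓ := by rw [← Nat.card_eq_fintype_card, hK]
  -- t divides ℓ - 1
  have htdvd : t ∣ ℓ - 1 := by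
    let f : T →* Kˣ :=
      { toFun := fun x => Units.mk ⟨(x : Fˣ), hT _ x.2⟩ ⟨((x : Fˣ)⁻¹ : Fˣ), hT _ (inv_mem x.2)⟩
          (by ext; simp) (by ext; simp)
        map_one' := by ext; simp
        map_mul' := fun a b => by ext; simp }
    have hf : Function.Injective f := by
      intro a b hab
      have : ((a : Fˣ) : F) = ((b : Fˣ) : F) := congrArg (fun z => ((z : Kˣ) : K) : Kˣ → F) hab
      exact Subtype.ext (Units.ext this)
    have := Subgroup.card_dvd_of_injective f hf
    rwa [ht, Nat.card_eq_fintype_card (α := Kˣ), Fintype.card_units, hcardK] at this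
  -- t divides |Fˣ|
  have htN : t ∣ Nat.card Fˣ := ht ▸ Subgroup.card_subgroup_dvd_card T
  set N := Nat.card Fˣ with hN
  have hN0 : 0 < N := Nat.card_pos
  -- a primitive t-th root of unity
  obtain ⟨g, hg⟩ := IsCyclic.exists_ofOrder_eq_natCard (α := Fˣ)
  set ξu : Fˣ := g ^ (N / t) with hξu
  have hordξ : orderOf ξu = t := by
    rw [hξu, orderOf_pow, hg, ← hN, Nat.gcd_eq_right (Nat.div_dvd_of_dvd htN),
      Nat.div_div_self htN hN0.ne']
  have hξ : IsPrimitiveRoot ((ξu : F)) t :=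
    IsPrimitiveRoot.coe_units_iff.mpr (hordξ ▸ IsPrimitiveRoot.orderOf ξu)
  set ξ : F := (ξu : F) with hξdef
  -- ξ lies in K
  have hξK : ξ ∈ K := by
    refine aux_mem_subfield_of_pow hℓ2 K hK ?_
    have h1 : ξ ^ (ℓ - 1) = 1 := by
      obtain ⟨m, hm⟩ := htdvd
      rw [hm, pow_mul, hξ.pow_eq_one, one_pow]
    calc ξ ^ ℓ = ξ ^ (ℓ - 1) * ξ := by
          rw [← pow_succ]; congr 1; omega
    _ = ξ := by rw [h1, one_mul]
  -- the primitive ns-th root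
  have hζ : IsPrimitiveRoot (ξ ^ (t / ns)) ns :=
    hξ.pow ht0 (Nat.div_mul_cancel hdvd).symm
  set ζ : F := ξ ^ (t / ns) with hζdef
  -- evaluation of L as a product
  set WS := (Set.toFinite (W : Set F)).toFinset with hWS
  have hLeval : ∀ y : F, L.eval y = ∏ α ∈ WS, (y - α) := by
    intro y; rw [hL]; simp [eval_prod]
  -- card of W is a power of ℓ
  have hWcard : WS.card = ℓ ^ (Module.finrank K W) := by
    rw [hWS, Set.Finite.card_toFinset]
    rw [← hcardK, ← Module.card_eq_pow_finrank (K := K) (V := W)]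
    exact Nat.card_eq_fintype_card.symm.trans Nat.card_eq_fintype_card
  -- scaling property of L
  have hscale : ∀ β : F, β ∈ K → β ≠ 0 → ∀ x : F, L.eval (β * x) = β * L.eval x := by
    intro β hβK hβ0 x
    have hβpowℓ : β ^ ℓ = β := by
      have : (⟨β, hβK⟩ : K) ^ ℓ = ⟨β, hβK⟩ := by
        rw [← hcardK]; exact FiniteField.pow_card _
      have := congrArg Subtype.val this
      simpa using this
    have hβpow : ∀ d : ℕ, β ^ ℓ ^ d = β := by
      intro d
      induction d with
      | zero => simp
      | succ d ih => rw [pow_succ, pow_mul, ih, hβpowℓ]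
    have himg : WS.image (fun α => β * α) = WS := by
      ext a
      simp only [Finset.mem_image, hWS, Set.Finite.mem_toFinset, SetLike.mem_coe]
      constructor
      · rintro ⟨w, hw, rfl⟩
        have := W.smul_mem (⟨β, hβK⟩ : K) hw
        simpa [Subfield.smul_def] using this
      · intro ha
        refine ⟨β⁻¹ * a, ?_, by field_simp⟩
        have := W.smul_mem (⟨β⁻¹, inv_mem hβK⟩ : K) ha
        simpa [Subfield.smul_def] using this
    have hinj : Set.InjOn (fun α => β * α) WS := fun a _ b _ h =>
      mul_left_cancel₀ hβ0 h
    calc L.eval (β * x) = ∏ α ∈ WS, (β * x - α) := hLeval _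
    _ = ∏ α ∈ WS.image (fun α => β * α), (β * x - α) := by rw [himg]
    _ = ∏ α ∈ WS, (β * x - β * α) := Finset.prod_image (fun a ha b hb h => hinj ha hb h)
    _ = ∏ α ∈ WS, β * (x - α) := by congr 1; ext α; ring
    _ = β ^ WS.card * ∏ α ∈ WS, (x - α) := by rw [Finset.prod_mul_distrib, Finset.prod_const]
    _ = β * L.eval x := by rw [hWcard, hβpow, hLeval]
  -- abbreviations
  set c : F := (L.eval γ) ^ (t / ns) with hc
  have hc0 : c ≠ 0 := pow_ne_zero _ hγ
  have hγt : (L.eval γ) ^ t ≠ 0 := pow_ne_zero _ hγ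
  haveI : NeZero ns := ⟨hns.ne'⟩
  -- the set equality
  have hset : {z : F | ∃ x : F, (L.eval x) ^ t = (L.eval γ) ^ t ∧ z = (L.eval x) ^ (t / ns)} =
      {z : F | ∃ ω : F, ω ^ ns = 1 ∧ z = ω * c} := by
    ext z
    simp only [Set.mem_setOf_eq]
    constructor
    · rintro ⟨x, hx, rfl⟩
      refine ⟨(L.eval x) ^ (t / ns) * c⁻¹, ?_, by field_simp⟩
      rw [mul_pow, ← pow_mul, inv_pow, hc, ← pow_mul, Nat.div_mul_cancel hdvd, hx]
      field_simp
    · rintro ⟨ω, hω, rfl⟩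
      obtain ⟨i, hi, rfl⟩ := hζ.eq_pow_of_pow_eq_one hω
      set β : F := ξ ^ i with hβ
      have hβK : β ∈ K := pow_mem hξK i
      have hβ0 : β ≠ 0 := by
        rw [hβ, hξdef, ← Units.val_pow_eq_pow_val]
        exact Units.ne_zero _
      have hβt : β ^ t = 1 := by
        rw [hβ, ← pow_mul, mul_comm, pow_mul, hξ.pow_eq_one, one_pow]
      refine ⟨β * γ, ?_, ?_⟩
      · rw [hscale β hβK hβ0, mul_pow, hβt, one_mul]
      · rw [hscale β hβK hβ0, mul_pow, hβ, hζdef, ← pow_mul, ← pow_mul, mul_comm i (t / ns), hc]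
  refine ⟨hset, ?_⟩
  rw [hset]
  have himg : {z : F | ∃ ω : F, ω ^ ns = 1 ∧ z = ω * c} =
      (fun ω => ω * c) '' {ω : F | ω ^ ns = 1} := by
    ext z
    simp only [Set.mem_setOf_eq, Set.mem_image]
    exact ⟨fun ⟨ω, h1, h2⟩ => ⟨ω, h1, h2.symm⟩, fun ⟨ω, h1, h2⟩ => ⟨ω, h1, h2.symm⟩⟩
  rw [himg, Set.ncard_image_of_injective _ (mul_left_injective₀ hc0)]
  have hroots : {ω : F | ω ^ ns = 1} = ↑(nthRootsFinset ns (1 : F)) := by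
    ext ω
    simp [Polynomial.mem_nthRootsFinset hns (1 : F)]
  rw [hroots, Set.ncard_coe_finset, hζ.card_nthRootsFinset]
end

section
/- Let F_q be a finite field, a_1,…,a_n ∈ F_q pairwise distinct, and let k be an integer with 1 ≤ k and k + 2 ≤ n. Set t = 1 + ⌊(n−k)/2⌋. Then there exist a word y ∈ F_q^n and two distinct codewords c_1, c_2 ∈ RS[n,k] such that y − c_1 and y − c_2 are both t-bursts. Consequently, RS[n,k] cannot deterministically uniquely correct all burst errors of length t = 1 + ⌊(n−k)/2⌋. -/
open Polynomial

/-- genus-zero instance of Lemma 5.2 of the paper. With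
`t = 1 + ⌊(n-k)/2⌋`, there are a word `y` and two distinct Reed–Solomon
codewords `c₁, c₂` such that both `y - c₁` and `y - c₂` are `t`-bursts; hence
`RS[n,k]` cannot deterministically uniquely correct all bursts of length `t`. -/
theorem rs_unique_decoding_limit
    (F : Type*) [Field F] (n k : ℕ)
    (a : Fin n → F) (ha : Function.Injective a)
    (hk : 1 ≤ k) (hkn : k + 2 ≤ n) :
    ∃ y c₁ c₂ : Fin n → F,
      (∃ f : Polynomial F, f.degree < k ∧ ∀ i, c₁ i = f.eval (a i)) ∧
      (∃ f : Polynomial F, f.degree < k ∧ ∀ i, c₂ i = f.eval (a i)) ∧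
      c₁ ≠ c₂ ∧
      (∀ i j : Fin n, (y - c₁) i ≠ 0 → (y - c₁) j ≠ 0 →
        (j : ℕ) - (i : ℕ) < 1 + (n - k) / 2) ∧
      (∀ i j : Fin n, (y - c₂) i ≠ 0 → (y - c₂) j ≠ 0 →
        (j : ℕ) - (i : ℕ) < 1 + (n - k) / 2) := by
  set m : ℕ := k + (n - k) / 2 with hm
  set S : Finset (Fin n) := Finset.univ.filter (fun i => (i : ℕ) < k - 1) with hS
  set f : Polynomial F := ∏ i ∈ S, (X - C (a i)) with hf
  have hfac : ∀ i : Fin n, (X - C (a i)) ≠ (0 : Polynomial F) := fun i => X_sub_C_ne_zero _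
  have hfne : f ≠ 0 := Finset.prod_ne_zero_iff.mpr fun i _ => hfac i
  have hScard : S.card ≤ k - 1 := by
    have : S.card ≤ (Finset.range (k - 1)).card := by
      refine Finset.card_le_card_of_injOn (fun i => (i : ℕ)) ?_ ?_
      · intro i hi
        simp only [hS, Finset.mem_filter] at hi
        simpa [List.mem_filter] using hi
      · intro i _ j _ hij
        exact Fin.ext hij
    simpa using this
  have hdeg : f.degree < (k : ℕ) := by
    rw [← natDegree_lt_iff_degree_lt hfne]
    have : f.natDegree = S.card := by
      rw [hf, natDegree_prod _ _ fun i _ => hfac i]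
      simp [natDegree_X_sub_C]
    omega
  have heval : ∀ i : Fin n, f.eval (a i) = ∏ j ∈ S, (a i - a j) := by
    intro i
    simp [hf, eval_prod]
  have heval_ne : ∀ i : Fin n, k - 1 ≤ (i : ℕ) → f.eval (a i) ≠ 0 := by
    intro i hi
    rw [heval]
    apply Finset.prod_ne_zero_iff.mpr
    intro j hj
    simp only [hS, Finset.mem_filter] at hj
    have : i ≠ j := by
      intro h; subst h; omega
    exact sub_ne_zero.mpr (fun h => this (ha h))
  have heval_zero : ∀ i : Fin n, (i : ℕ) < k - 1 → f.eval (a i) = 0 := by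
    intro i hi
    rw [heval]
    apply Finset.prod_eq_zero (i := i)
    · simp [hS, hi]
    · simp
  set c₂ : Fin n → F := fun i => f.eval (a i) with hc₂
  set y : Fin n → F := fun i => if (i : ℕ) < m then c₂ i else 0 with hy
  refine ⟨y, 0, c₂, ⟨0, ?_, by simp⟩, ⟨f, hdeg, fun i => rfl⟩, ?_, ?_, ?_⟩
  · rw [degree_zero]; exact_mod_cast WithBot.bot_lt_coe k
  · -- c₁ ≠ c₂
    intro h
    have hlt : k - 1 < n := by omega
    have := congrFun h ⟨k - 1, hlt⟩
    exact heval_ne ⟨k - 1, hlt⟩ (le_refl _) (by simpa using this.symm)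
  · -- burst for y - 0 = y
    intro i j hi hj
    have hi' : k - 1 ≤ (i : ℕ) := by
      by_contra h
      push_neg at h
      have := heval_zero i h
      simp [hy, hc₂, this] at hi
    have hj' : (j : ℕ) < m := by
      by_contra h
      simp [hy, h] at hj
    omega
  · -- burst for y - c₂
    intro i j hi hj
    have hi' : m ≤ (i : ℕ) := by
      by_contra h
      push_neg at h
      simp [hy, h] at hi
    have hjn : (j : ℕ) < n := j.isLt
    omega
end

section
/- Let F_q be a finite field, let α ∈ F_q^* have multiplicative order n, let ξ ∈ F_q^*, and set a_j = ξα^{j−1} for j = 1,…,n (these are pairwise distinct). Let 1 ≤ k ≤ n − 2 and d = n − k. Suppose y = c + e ∈ F_q^n where c ∈ RS[n,k] (with evaluation points a_1,…,a_n) and e ∈ F_q^n satisfies e_j = 0 for all j ∉ {i, i+1, …, i+ℓ−1}, for some integers i, ℓ with 1 ≤ i, i + ℓ − 1 ≤ n and 1 ≤ ℓ ≤ d − 1. Define δ_j = ∏_{j'≠j}(a_j − a_{j'})^{−1}, the syndromes S_v = Σ_{j=1}^n y_j δ_j a_j^v for 0 ≤ v ≤ d−1, the polynomial Λ(X) = ∏_{j=1}^{d−1}(1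 − a_j X) = Σ_{v=0}^{d−1} Λ_v X^v, and Γ(X) = Σ_{v=0}^{d−1} S_{d−1−v} Λ_v X^v. Then Γ(α^{i−1−s}) = 0 for every s = 0, 1, …, d − ℓ − 1; that is, Γ has the d − ℓ consecutive roots α^{i−1}, α^{i−2}, …, α^{i−d+ℓ}. -/
open Polynomial

/-- Lemma A.1 of the paper, underlying Wu's burst-interval
identification. For the Reed–Solomon code on the evaluation points
`a_j = ξ·α^{j-1}` (with `α` of order `n`), if `y = c + e` with `c` a codeword
and `e` supported in the window `{i, …, i+ℓ-1}` (`1 ≤ ℓ ≤ d-1`, `d = n-k`),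
then the polynomial `Γ(X) = Σ_v S_{d-1-v} Λ_v X^v` built from the syndromes
`S_v` and the reciprocal error locator `Λ(X) = ∏_{j=1}^{d-1}(1 - a_j X)` has
the `d - ℓ` consecutive roots `α^{i-1}, α^{i-2}, …, α^{i-d+ℓ}`. -/
theorem wu_gamma_roots
    (F : Type*) [Field F] [DecidableEq F]
    (n : ℕ) (α ξ : Fˣ) (hα : orderOf α = n)
    (k : ℕ) (hk : 1 ≤ k) (hkn : k + 2 ≤ n)
    (d : ℕ) (hd : d = n - k)
    (a : Fin n → F) (haj : ∀ j : Fin n, a j = (ξ : F) * (α : F) ^ (j : ℕ))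
    (y c e : Fin n → F) (hy : y = c + e)
    (hc : ∃ f : Polynomial F, f.degree < k ∧ ∀ j, c j = f.eval (a j))
    (i ℓ : ℕ) (hi : 1 ≤ i) (hiℓ : i + ℓ - 1 ≤ n) (hℓ1 : 1 ≤ ℓ) (hℓd : ℓ ≤ d - 1)
    (he : ∀ j : Fin n, ((j : ℕ) + 1 < i ∨ i + ℓ ≤ (j : ℕ) + 1) → e j = 0)
    (δ : Fin n → F)
    (hδ : ∀ j, δ j = ∏ j' ∈ Finset.univ.erase j, (a j - a j')⁻¹)
    (S : ℕ → F) (hS : ∀ v, S v = ∑ j, y j * δ j * (a j) ^ v)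
    (Λ : Polynomial F)
    (hΛ : Λ = ∏ v ∈ Finset.range (d - 1), (1 - C ((ξ : F) * (α : F) ^ v) * X))
    (Γ : Polynomial F)
    (hΓ : Γ = ∑ v ∈ Finset.range d, C (S (d - 1 - v) * Λ.coeff v) * X ^ v) :
    ∀ s : ℕ, s + ℓ < d →
      Γ.eval (((α ^ ((i : ℤ) - 1 - (s : ℤ)) : Fˣ) : F)) = 0 := by
  intro s hs
  have hn0 : 0 < n := by omega
  haveI : NeZero n := ⟨by omega⟩
  have hd2 : 2 ≤ d := by omega
  have hdn : d = n - k := hd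
  have hαU : α ^ n = 1 := by rw [← hα]; exact pow_orderOf_eq_one α
  have hαF : (α : F) ^ n = 1 := by
    rw [← Units.val_pow_eq_pow_val, hαU, Units.val_one]
  have hξ0 : (ξ : F) ≠ 0 := ξ.ne_zero
  have hα0 : (α : F) ≠ 0 := α.ne_zero
  have horder : orderOf (α : F) = n := by rw [orderOf_units, hα]
  have hαne1 : ∀ m : ℕ, 0 < m → m < n → (α : F) ^ m ≠ 1 := by
    intro m hm1 hm2 h
    have h2 := orderOf_dvd_of_pow_eq_one h
    rw [horder] at h2
    have := Nat.le_of_dvd hm1 h2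
    omega
  have hgeom : ∀ m : ℕ, 0 < m → m < n → ∑ j : Fin n, ((α : F) ^ m) ^ (j : ℕ) = 0 := by
    intro m hm1 hm2
    rw [Fin.sum_univ_eq_sum_range (fun j => ((α : F) ^ m) ^ j) n]
    rw [geom_sum_eq (hαne1 m hm1 hm2) n]
    rw [← pow_mul, mul_comm, pow_mul, hαF, one_pow, sub_self, zero_div]
  have hmod : ∀ a b : ℕ, a % n = b % n → (α : F) ^ a = (α : F) ^ b := by
    intro a b h
    have hU : α ^ a = α ^ b :=
      pow_eq_pow_iff_modEq.mpr (show a ≡ b [MOD orderOf α] by rw [hα]; exact h)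
    rw [← Units.val_pow_eq_pow_val, ← Units.val_pow_eq_pow_val, hU]
  -- the closed form for δ
  have hP : ∃ K : F, ∀ j : Fin n, δ j = K * (α : F) ^ (j : ℕ) := by
    set P : F := ∏ t ∈ (Finset.univ : Finset (Fin n)).erase 0, (1 - (α : F) ^ (t : ℕ)) with hPdef
    have hsubval : ∀ j j' : Fin n, (j' : ℕ) % n = (((j : ℕ) + ((j' - j : Fin n) : ℕ))) % n := by
      intro j j'
      have hv : ((j' - j : Fin n) : ℕ) = (n - (j : ℕ) + (j' : ℕ)) % n := by
        rw [Fin.sub_def]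
      have h1 : ((j : ℕ) + ((j' - j : Fin n) : ℕ)) ≡ (j : ℕ) + (n - (j : ℕ) + (j' : ℕ)) [MOD n] := by
        rw [hv]
        exact Nat.ModEq.add_left _ (Nat.mod_modEq _ _)
      have h2 : (j : ℕ) + (n - (j : ℕ) + (j' : ℕ)) = n + (j' : ℕ) := by
        have := j.is_lt; omega
      calc (j' : ℕ) % n = (n + (j' : ℕ)) % n := (Nat.add_mod_left n _).symm
        _ = ((j : ℕ) + (n - (j : ℕ) + (j' : ℕ))) % n := by rw [h2]
        _ = ((j : ℕ) + ((j' - j : Fin n) : ℕ)) % n := h1.symm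
    have hterm : ∀ j j' : Fin n, a j - a j'
        = (ξ : F) * (α : F) ^ (j : ℕ) * (1 - (α : F) ^ ((j' - j : Fin n) : ℕ)) := by
      intro j j'
      rw [haj, haj]
      have h : (α : F) ^ (j' : ℕ) = (α : F) ^ (j : ℕ) * (α : F) ^ ((j' - j : Fin n) : ℕ) := by
        rw [← pow_add]; exact hmod _ _ (hsubval j j')
      rw [h]; ring
    have hre : ∀ j : Fin n, ∏ j' ∈ Finset.univ.erase j, (1 - (α : F) ^ ((j' - j : Fin n) : ℕ)) = P := by
      intro j
      refine Finset.prod_nbij' (fun j' => j' - j) (fun t => t + j) ?_ ?_ ?_ ?_ ?_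
      · intro x hx
        have hx' : x ≠ j := (Finset.mem_erase.mp hx).1
        exact Finset.mem_erase.mpr ⟨sub_ne_zero.mpr hx', Finset.mem_univ _⟩
      · intro t ht
        have ht' : t ≠ 0 := (Finset.mem_erase.mp ht).1
        refine Finset.mem_erase.mpr ⟨?_, Finset.mem_univ _⟩
        intro h
        exact ht' (by simpa using congrArg (fun z => z - j) h)
      · intro x _; exact sub_add_cancel x j
      · intro t _; exact add_sub_cancel_right t j
      · intro x _; rfl
    have hprod : ∀ j : Fin n, ∏ j' ∈ Finset.univ.erase j, (a j - a j')
        = ((ξ : F) * (α : F) ^ (j : ℕ)) ^ (n - 1) * P := by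
      intro j
      calc ∏ j' ∈ Finset.univ.erase j, (a j - a j')
          = ∏ j' ∈ Finset.univ.erase j,
              ((ξ : F) * (α : F) ^ (j : ℕ)) * (1 - (α : F) ^ ((j' - j : Fin n) : ℕ)) := by
            refine Finset.prod_congr rfl fun j' _ => ?_
            rw [hterm j j']
        _ = ((ξ : F) * (α : F) ^ (j : ℕ)) ^ (n - 1)
            * ∏ j' ∈ Finset.univ.erase j, (1 - (α : F) ^ ((j' - j : Fin n) : ℕ)) := by
            rw [Finset.prod_mul_distrib, Finset.prod_const,
              Finset.card_erase_of_mem (Finset.mem_univ j), Finset.card_univ, Fintype.card_fin]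
        _ = ((ξ : F) * (α : F) ^ (j : ℕ)) ^ (n - 1) * P := by rw [hre j]
    refine ⟨((ξ : F) ^ (n - 1) * P)⁻¹, fun j => ?_⟩
    rw [hδ j, Finset.prod_inv_distrib, hprod j, mul_pow]
    have hpow : ((α : F) ^ (j : ℕ)) ^ (n - 1) * (α : F) ^ (j : ℕ) = 1 := by
      rw [← pow_succ, Nat.sub_add_cancel (by omega : 1 ≤ n), ← pow_mul, mul_comm (j : ℕ) n,
        pow_mul, hαF, one_pow]
    have hinv : (((α : F) ^ (j : ℕ)) ^ (n - 1))⁻¹ = (α : F) ^ (j : ℕ) :=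
      inv_eq_of_mul_eq_one_left (by rw [mul_comm]; exact hpow)
    rw [mul_inv, mul_inv, mul_inv, hinv]
    ring
  obtain ⟨K, hK⟩ := hP
  -- codeword part of syndromes vanishes
  have hcK : ∀ v : ℕ, v < d → ∑ j : Fin n, c j * δ j * (a j) ^ v = 0 := by
    intro v hv
    obtain ⟨f, hfdeg, hf⟩ := hc
    have hfnat : f.natDegree < k := by
      by_cases hf0 : f = 0
      · rw [hf0, natDegree_zero]; omega
      · exact (natDegree_lt_iff_degree_lt hf0).mpr (by exact_mod_cast hfdeg)
    have hcf : ∀ j : Fin n, c j = ∑ u ∈ Finset.range k, f.coeff u * (a j) ^ u := fun j => by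
      rw [hf j, eval_eq_sum_range' hfnat]
    have key : ∀ j : Fin n, c j * δ j * (a j) ^ v
        = ∑ u ∈ Finset.range k, f.coeff u * (ξ : F) ^ (u + v) * K * ((α : F) ^ (u + v + 1)) ^ (j : ℕ) := by
      intro j
      rw [hcf j, Finset.sum_mul, Finset.sum_mul]
      refine Finset.sum_congr rfl fun u _ => ?_
      rw [haj, hK]
      have hexp : ((α : F) ^ (u + v + 1)) ^ (j : ℕ)
          = ((α : F) ^ (j : ℕ)) ^ u * ((α : F) ^ (j : ℕ)) * ((α : F) ^ (j : ℕ)) ^ v := by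
        rw [← pow_mul, ← pow_mul, ← pow_mul, ← pow_add, ← pow_add]
        congr 1; ring
      rw [hexp, mul_pow, mul_pow]
      ring
    calc ∑ j : Fin n, c j * δ j * (a j) ^ v
        = ∑ j : Fin n, ∑ u ∈ Finset.range k,
            f.coeff u * (ξ : F) ^ (u + v) * K * ((α : F) ^ (u + v + 1)) ^ (j : ℕ) :=
          Finset.sum_congr rfl fun j _ => key j
      _ = ∑ u ∈ Finset.range k, ∑ j : Fin n,
            f.coeff u * (ξ : F) ^ (u + v) * K * ((α : F) ^ (u + v + 1)) ^ (j : ℕ) :=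
          Finset.sum_comm
      _ = 0 := by
          refine Finset.sum_eq_zero fun u hu => ?_
          have hu' : u < k := Finset.mem_range.mp hu
          rw [← Finset.mul_sum, hgeom (u + v + 1) (by omega) (by omega), mul_zero]
  have hSe : ∀ v : ℕ, v < d → S v = ∑ j : Fin n, e j * δ j * (a j) ^ v := by
    intro v hv
    rw [hS v]
    have : ∀ j : Fin n, y j * δ j * (a j) ^ v
        = c j * δ j * (a j) ^ v + e j * δ j * (a j) ^ v := by
      intro j; rw [hy]; simp [Pi.add_apply]; ring
    rw [Finset.sum_congr rfl fun j _ => this j, Finset.sum_add_distrib, hcK v hv, zero_add]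
  -- degree bound for Λ
  have hΛd : Λ.natDegree < d := by
    rw [hΛ]
    calc (∏ v ∈ Finset.range (d - 1), (1 - C ((ξ : F) * (α : F) ^ v) * X)).natDegree
        ≤ ∑ v ∈ Finset.range (d - 1), (1 - C ((ξ : F) * (α : F) ^ v) * X).natDegree :=
          natDegree_prod_le _ _
      _ ≤ ∑ v ∈ Finset.range (d - 1), 1 := by
          refine Finset.sum_le_sum fun v _ => ?_
          refine le_trans (natDegree_sub_le _ _) ?_
          simp only [natDegree_one, max_le_iff]
          refine ⟨by omega, le_trans natDegree_mul_le ?_⟩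
          simp only [natDegree_C, natDegree_X, zero_add, le_refl]
      _ = d - 1 := by simp
      _ < d := by omega
  -- main computation
  set β : F := ((α ^ ((i : ℤ) - 1 - (s : ℤ)) : Fˣ) : F) with hβ
  rw [hΓ, eval_finset_sum]
  simp only [eval_mul, eval_C, eval_pow, eval_X]
  calc ∑ v ∈ Finset.range d, S (d - 1 - v) * Λ.coeff v * β ^ v
      = ∑ v ∈ Finset.range d, ∑ j : Fin n,
          e j * δ j * (a j) ^ (d - 1 - v) * Λ.coeff v * β ^ v := by
        refine Finset.sum_congr rfl fun v hv => ?_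
        rw [hSe (d - 1 - v) (by omega), Finset.sum_mul, Finset.sum_mul]
    _ = ∑ j : Fin n, ∑ v ∈ Finset.range d,
          e j * δ j * (a j) ^ (d - 1 - v) * Λ.coeff v * β ^ v := Finset.sum_comm
    _ = 0 := by
        refine Finset.sum_eq_zero fun j _ => ?_
        by_cases hej : e j = 0
        · simp [hej]
        · have hwin : i ≤ (j : ℕ) + 1 ∧ (j : ℕ) + 1 < i + ℓ := by
            by_contra h
            exact hej (he j (by omega))
          have haj0 : a j ≠ 0 := by
            rw [haj]; exact mul_ne_zero hξ0 (pow_ne_zero _ hα0)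
          set w : ℕ := (j : ℕ) + 1 + s - i with hw
          have hu : (ξ : Fˣ) * α ^ w * α ^ ((i : ℤ) - 1 - (s : ℤ)) = ξ * α ^ (j : ℕ) := by
            rw [mul_assoc]
            congr 1
            rw [← zpow_natCast α w, ← zpow_natCast α (j : ℕ), ← zpow_add]
            congr 1
            have : (w : ℤ) = (j : ℕ) + 1 + (s : ℤ) - i := by
              have := hwin.1; push_cast [hw]; omega
            omega
          have h1 : (ξ : F) * (α : F) ^ w * β = a j := by
            have h2 := congrArg (Units.val : Fˣ → F) hu
            simp only [Units.val_mul, Units.val_pow_eq_pow_val] at h2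
            rw [hβ, haj j]
            exact h2
          have hΛ0 : Λ.eval (β * (a j)⁻¹) = 0 := by
            rw [hΛ, eval_prod]
            refine Finset.prod_eq_zero (Finset.mem_range.mpr (show w < d - 1 by omega)) ?_
            simp only [eval_sub, eval_one, eval_mul, eval_C, eval_X]
            rw [← mul_assoc, h1, mul_inv_cancel₀ haj0, sub_self]
          calc ∑ v ∈ Finset.range d, e j * δ j * (a j) ^ (d - 1 - v) * Λ.coeff v * β ^ v
              = e j * δ j * (a j) ^ (d - 1) * Λ.eval (β * (a j)⁻¹) := by
                rw [eval_eq_sum_range' hΛd (β * (a j)⁻¹), Finset.mul_sum]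
                refine Finset.sum_congr rfl fun v hv => ?_
                have hv' : v < d := Finset.mem_range.mp hv
                have hpa : (a j) ^ (d - 1 - v) = (a j) ^ (d - 1) * ((a j)⁻¹) ^ v := by
                  rw [inv_pow, eq_comm, mul_inv_eq_iff_eq_mul₀ (pow_ne_zero _ haj0), ← pow_add]
                  congr 1; omega
                rw [hpa, mul_pow]
                ring
            _ = 0 := by rw [hΛ0, mul_zero]
end

section
/- Let κ ≥ 1 and λ ≥ 0 be integers. Define I_1(λ) = {(i_1,i_2,i_3) ∈ ℤ^3 : i_1κ² + i_2κ + i_3(κ+1) ≤ λ, i_2κ + i_3(κ+1) ≤ i_1κ, 0 ≤ i_1, 0 ≤ i_2 ≤ κ−1, 0 ≤ i_3 ≤ κ−1}, and let I_2(λ) be the set of triples (i_1, i_2, i_3) ∈ ℤ^3 satisfying: i_1κ² + i_2κ + i_3(κ+1) ≤ λ, i_3(κ+1) ≤ i_2κ + i_1κ, 1 ≤ i_2 ≤ κ, i_1 ≥ κ·i_2, 0 ≤ i_3 ≤ κ−1, and (i_1−1, κ−i_2, i_3) ∉ I_1(λ). Then every (i_1,i_2,i_3) ∈ I_2(λ)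 satisfies i_2 = 1, 1 ≤ i_3 ≤ κ−1, and κ ≤ i_1 ≤ i_3 + κ; consequently |I_2(λ)| ≤ (κ² + κ − 2)/2. -/
/-- The index set `I₁(λ)` of the paper's Lemma 5.8 (Garcia–Stichtenoth tower,
third function field). -/
def gsIndexSetOne (κ : ℕ) (lam : ℕ) : Set (ℤ × ℤ × ℤ) :=
  {x | x.1 * (κ : ℤ) ^ 2 + x.2.1 * (κ : ℤ) + x.2.2 * ((κ : ℤ) + 1) ≤ (lam : ℤ) ∧
       x.2.1 * (κ : ℤ) + x.2.2 * ((κ : ℤ) + 1) ≤ x.1 * (κ : ℤ) ∧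
       0 ≤ x.1 ∧
       0 ≤ x.2.1 ∧ x.2.1 ≤ (κ : ℤ) - 1 ∧
       0 ≤ x.2.2 ∧ x.2.2 ≤ (κ : ℤ) - 1}

/-- The index set `I₂(λ)` of the paper's Lemma 5.8. -/
def gsIndexSetTwo (κ : ℕ) (lam : ℕ) : Set (ℤ × ℤ × ℤ) :=
  {x | x.1 * (κ : ℤ) ^ 2 + x.2.1 * (κ : ℤ) + x.2.2 * ((κ : ℤ) + 1) ≤ (lam : ℤ) ∧
       x.2.2 * ((κ : ℤ) + 1) ≤ x.2.1 * (κ : ℤ) + x.1 * (κ : ℤ) ∧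
       1 ≤ x.2.1 ∧ x.2.1 ≤ (κ : ℤ) ∧
       (κ : ℤ) * x.2.1 ≤ x.1 ∧
       0 ≤ x.2.2 ∧ x.2.2 ≤ (κ : ℤ) - 1 ∧
       (x.1 - 1, (κ : ℤ) - x.2.1, x.2.2) ∉ gsIndexSetOne κ lam}

/-- combinatorial content of Lemma 5.8 of the paper. Every
triple `(i₁,i₂,i₃) ∈ I₂(λ)` satisfies `i₂ = 1`, `1 ≤ i₃ ≤ κ-1` and
`κ ≤ i₁ ≤ i₃ + κ`; consequently `|I₂(λ)| ≤ (κ² + κ - 2)/2`. -/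
theorem gs_index_set_two_bound (κ : ℕ) (hκ : 1 ≤ κ) (lam : ℕ) :
    (∀ x ∈ gsIndexSetTwo κ lam,
      x.2.1 = 1 ∧ 1 ≤ x.2.2 ∧ x.2.2 ≤ (κ : ℤ) - 1 ∧
      (κ : ℤ) ≤ x.1 ∧ x.1 ≤ x.2.2 + (κ : ℤ)) ∧
    (gsIndexSetTwo κ lam).ncard ≤ (κ ^ 2 + κ - 2) / 2 := by
  have hκ' : (1:ℤ) ≤ (κ:ℤ) := by exact_mod_cast hκ
  have key : ∀ x ∈ gsIndexSetTwo κ lam,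
      x.2.1 = 1 ∧ 1 ≤ x.2.2 ∧ x.2.2 ≤ (κ:ℤ) - 1 ∧
      (κ:ℤ) ≤ x.1 ∧ x.1 ≤ x.2.2 + (κ:ℤ) := by
    rintro ⟨a, b, c⟩ hx
    obtain ⟨h1, h2, h3, h4, h5, h6, h7, h8⟩ := hx
    simp only at h1 h2 h3 h4 h5 h6 h7 h8 ⊢
    have hn2 : ¬ (((κ:ℤ) - b) * κ + c * ((κ:ℤ) + 1) ≤ (a - 1) * κ) := by
      intro h
      apply h8
      simp only [gsIndexSetOne, Set.mem_setOf_eq]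
      refine ⟨by nlinarith, h, by nlinarith, by linarith, by linarith, h6, h7⟩
    push_neg at hn2
    have hb : b = 1 := by nlinarith
    subst hb
    refine ⟨rfl, by nlinarith, h7, by linarith, by nlinarith⟩
  refine ⟨key, ?_⟩
  set T : Finset (ℤ × ℤ × ℤ) := (Finset.Icc (1:ℤ) ((κ:ℤ) - 1)).biUnion
      (fun t => (Finset.Icc (κ:ℤ) (t + κ)).image (fun a => (a, (1:ℤ), t))) with hT
  have hsub : gsIndexSetTwo κ lam ⊆ ↑T := by
    intro x hx
    obtain ⟨hb, hc1, hc2, ha1, ha2⟩ := key x hx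
    simp only [hT, Finset.coe_biUnion, Set.mem_iUnion, Finset.mem_coe, Finset.mem_Icc,
      Finset.mem_image]
    exact ⟨x.2.2, ⟨hc1, hc2⟩, x.1, ⟨ha1, ha2⟩, by rw [← hb]⟩
  have h1 : (gsIndexSetTwo κ lam).ncard ≤ T.card := by
    have := Set.ncard_le_ncard hsub T.finite_toSet
    simpa [Set.ncard_coe_finset] using this
  have h2 : T.card ≤ ∑ t ∈ Finset.Icc (1:ℤ) ((κ:ℤ) - 1), (t + 1).toNat := by
    refine le_trans Finset.card_biUnion_le (Finset.sum_le_sum fun t ht => ?_)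
    calc ((Finset.Icc (κ:ℤ) (t + κ)).image (fun a => (a, (1:ℤ), t))).card
        ≤ (Finset.Icc (κ:ℤ) (t + κ)).card := Finset.card_image_le
      _ = (t + 1).toNat := by rw [Int.card_Icc]; congr 1; ring
  have himg : Finset.Icc (1:ℤ) ((κ:ℤ) - 1)
      = (Finset.range (κ - 1)).image (fun n : ℕ => (n:ℤ) + 1) := by
    ext m
    simp only [Finset.mem_Icc, Finset.mem_image, Finset.mem_range]
    constructor
    · rintro ⟨hm1, hm2⟩
      exact ⟨(m - 1).toNat, by omega, by omega⟩
    · rintro ⟨n, hn, rfl⟩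
      omega
  have h3 : ∑ t ∈ Finset.Icc (1:ℤ) ((κ:ℤ) - 1), (t + 1).toNat
      = ∑ n ∈ Finset.range (κ - 1), (n + 2) := by
    rw [himg, Finset.sum_image (by intro x _ y _ h; have h' : (x:ℤ) + 1 = (y:ℤ) + 1 := h; omega)]
    exact Finset.sum_congr rfl fun n _ => by omega
  have h4 : ∑ n ∈ Finset.range (κ - 1), (n + 2) ≤ (κ ^ 2 + κ - 2) / 2 := by
    obtain ⟨k, rfl⟩ : ∃ k, κ = k + 1 := ⟨κ - 1, by omega⟩
    simp only [Nat.add_sub_cancel]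
    set A := ∑ n ∈ Finset.range k, n with hA
    have hsum : ∑ n ∈ Finset.range k, (n + 2) = A + 2 * k := by
      rw [Finset.sum_add_distrib, Finset.sum_const, Finset.card_range, hA]; ring
    have hg : A * 2 = k * (k - 1) := Finset.sum_range_id_mul_two k
    have hkk : k * (k - 1) + k = k * k := by
      cases k with
      | zero => rfl
      | succ j => simp [Nat.succ_sub_one]; ring
    have hk2 : (k + 1) ^ 2 = k * k + 2 * k + 1 := by ring
    have e0 : A * 2 + k = k * k := by linarith
    have e2 : (k + 1) ^ 2 + (k + 1) = (A + 2 * k) * 2 + 2 := by linarith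
    have e1 : (k + 1) ^ 2 + (k + 1) - 2 = (A + 2 * k) * 2 := Nat.sub_eq_of_eq_add e2
    rw [e1, Nat.mul_div_cancel _ two_pos, hsum]
  omega
end
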